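/- arXiv:math/0412284 — 6 statements merged into one kernel-verified Lean document; each statement's English description precedes it below -/
import Mathlib

section
/- Let k be a field of characteristic ≠ 2 and O = k[[T₁,T₂]] with maximal ideal m. For any integer p ≥ 3, sup over t ∈ O of ord(T₁² + T₂^p − t²) equals p; equivalently, for every t ∈ O one has T₁² + T₂^p − t² ∉ m^{p+1}, while there exists t ∈ O (namely t = T₁) with T₁² + T₂^p − t² ∈ m^p. -/
open MvPowerSeries

open MvPowerSeries

lemma fin2_eq_single1 (x : Fin 2 →₀ ℕ) (h : x 0 = 0) : x = Finsupp.single 1 (x 1) := by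
  ext i; fin_cases i <;> simp [Finsupp.single_apply, h]

lemma fin2_eq_single0 (x : Fin 2 →₀ ℕ) (h : x 1 = 0) : x = Finsupp.single 0 (x 0) := by
  ext i; fin_cases i <;> simp [Finsupp.single_apply, h]

lemma fin2_eq_zero (x : Fin 2 →₀ ℕ) (h0 : x 0 = 0) (h1 : x 1 = 0) : x = 0 := by
  ext i; fin_cases i <;> simp [h0, h1]

lemma coeff_zero_of_mem_pow {k : Type*} [Field k] :
    ∀ (N : ℕ) (f : MvPowerSeries (Fin 2) k),
      f ∈ (IsLocalRing.maximalIdeal (MvPowerSeries (Fin 2) k)) ^ N →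
      ∀ d : Fin 2 →₀ ℕ, d 0 + d 1 < N → MvPowerSeries.coeff d f = 0 := by
  intro N
  induction N with
  | zero => intro f _ d hd; omega
  | succ N ih =>
    intro f hf
    rw [pow_succ] at hf
    refine Submodule.mul_induction_on hf ?_ ?_
    · intro a ha b hb d hd
      rw [MvPowerSeries.coeff_mul]
      apply Finset.sum_eq_zero
      intro x hx
      rw [Finset.HasAntidiagonal.mem_antidiagonal] at hx
      have h0 := DFunLike.congr_fun hx 0
      have h1 := DFunLike.congr_fun hx 1
      simp only [Finsupp.add_apply] at h0 h1
      by_cases hc : x.1 0 + x.1 1 < N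
      · rw [ih a ha _ hc, zero_mul]
      · have hz : x.2 = 0 := fin2_eq_zero _ (by omega) (by omega)
        have hb0 : MvPowerSeries.coeff 0 b = 0 := by
          rw [MvPowerSeries.coeff_zero_eq_constantCoeff_apply]
          by_contra h
          exact (IsLocalRing.mem_maximalIdeal b).mp hb
            (MvPowerSeries.isUnit_iff_constantCoeff.mpr (isUnit_iff_ne_zero.mpr h))
        rw [hz, hb0, mul_zero]
    · intro a b ha hb d hd; rw [map_add, ha d hd, hb d hd, add_zero]

section Test
variable {k : Type*} [Field k] (hk : ringChar k ≠ 2) (p : ℕ) (hp : 3 ≤ p)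
  (t : MvPowerSeries (Fin 2) k)
  (key : ∀ d : Fin 2 →₀ ℕ, d 0 + d 1 ≤ p →
      MvPowerSeries.coeff d ((X 0) ^ 2 + (X 1) ^ p - t ^ 2) = 0)

omit hp in
include key in
lemma coeffF (d : Fin 2 →₀ ℕ) (hd : d 0 + d 1 ≤ p)
    (h0 : d ≠ Finsupp.single 0 2) :
    (if d = Finsupp.single 1 p then (1:k) else 0)
      = ∑ x ∈ Finset.HasAntidiagonal.antidiagonal d, (coeff x.1 t) * (coeff x.2 t) := by
  have h := key d hd
  rw [map_sub, map_add, MvPowerSeries.X_pow_eq, MvPowerSeries.X_pow_eq,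
    MvPowerSeries.coeff_monomial, MvPowerSeries.coeff_monomial, if_neg h0,
    pow_two, MvPowerSeries.coeff_mul, sub_eq_zero, zero_add] at h
  exact h

include hp key in
lemma coeff_t0 : MvPowerSeries.coeff (0 : Fin 2 →₀ ℕ) t = 0 := by
  have h := coeffF p t key 0 (by simp) (by
    intro h; have := DFunLike.congr_fun h 0; simp [Finsupp.single_apply] at this)
  rw [if_neg (by intro h; have := DFunLike.congr_fun h 1; simp [Finsupp.single_apply] at this; omega)] at h
  simp only [Finset.HasAntidiagonal.antidiagonal_zero, Finset.sum_singleton] at h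
  have : MvPowerSeries.coeff (0 : Fin 2 →₀ ℕ) t ^ 2 = 0 := by rw [pow_two]; exact h.symm
  exact pow_eq_zero_iff two_ne_zero |>.mp this

end Test

section Test2
variable {k : Type*} [Field k] (hk : ringChar k ≠ 2) (p : ℕ) (hp : 3 ≤ p)
  (t : MvPowerSeries (Fin 2) k)
  (key : ∀ d : Fin 2 →₀ ℕ, d 0 + d 1 ≤ p →
      MvPowerSeries.coeff d ((X 0) ^ 2 + (X 1) ^ p - t ^ 2) = 0)

include hp key in
lemma step_a0 :
    MvPowerSeries.coeff (Finsupp.single 0 1) t * MvPowerSeries.coeff (Finsupp.single 0 1) t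
      = 1 := by
  classical
  have h := key (Finsupp.single 0 2) (by simp [Finsupp.single_apply]; omega)
  rw [map_sub, map_add, MvPowerSeries.X_pow_eq, MvPowerSeries.X_pow_eq,
    MvPowerSeries.coeff_monomial, MvPowerSeries.coeff_monomial, if_pos rfl,
    if_neg (by intro h; have := DFunLike.congr_fun h 0; simp [Finsupp.single_apply] at this),
    pow_two, MvPowerSeries.coeff_mul, add_zero, sub_eq_zero] at h
  have t0 := coeff_t0 p hp t key
  rw [h]
  have hsub : ({(Finsupp.single (0:Fin 2) 1, Finsupp.single (0:Fin 2) 1)} :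
      Finset ((Fin 2 →₀ ℕ) × (Fin 2 →₀ ℕ))) ⊆ Finset.HasAntidiagonal.antidiagonal (Finsupp.single 0 2) := by
    intro x hx
    rw [Finset.mem_singleton] at hx
    rw [Finset.HasAntidiagonal.mem_antidiagonal, hx, ← Finsupp.single_add]
  rw [← Finset.sum_subset hsub ?hz, Finset.sum_singleton]
  case hz =>
    intro x hx hnx
    rw [Finset.HasAntidiagonal.mem_antidiagonal] at hx
    rw [Finset.mem_singleton] at hnx
    have h0 := DFunLike.congr_fun hx 0
    have h1 := DFunLike.congr_fun hx 1
    simp only [Finsupp.add_apply, Finsupp.single_apply] at h0 h1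
    norm_num at h0 h1
    rcases Nat.lt_or_ge (x.1 0) 1 with hc | hc
    · rw [fin2_eq_zero x.1 (by omega) (by omega), t0, zero_mul]
    · rcases Nat.lt_or_ge (x.2 0) 1 with hc2 | hc2
      · rw [fin2_eq_zero x.2 (by omega) (by omega), t0, mul_zero]
      · exfalso
        apply hnx
        have e1 : x.1 = Finsupp.single 0 1 := by
          rw [fin2_eq_single0 x.1 (by omega)]; congr 1; omega
        have e2 : x.2 = Finsupp.single 0 1 := by
          rw [fin2_eq_single0 x.2 (by omega)]; congr 1; omega
        exact Prod.ext e1 e2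

end Test2

section Test3
variable {k : Type*} [Field k] (hk : ringChar k ≠ 2) (p : ℕ) (hp : 3 ≤ p)
  (t : MvPowerSeries (Fin 2) k)
  (key : ∀ d : Fin 2 →₀ ℕ, d 0 + d 1 ≤ p →
      MvPowerSeries.coeff d ((X 0) ^ 2 + (X 1) ^ p - t ^ 2) = 0)

include hk hp key in
lemma step_b : ∀ j, j < p → MvPowerSeries.coeff (Finsupp.single 1 j) t = 0 := by
  classical
  have t0 := coeff_t0 p hp t key
  have ha := step_a0 p hp t key
  have ha0 : MvPowerSeries.coeff (Finsupp.single 0 1) t ≠ 0 :=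
    left_ne_zero_of_mul_eq_one ha
  have h2 : (2 : k) ≠ 0 := Ring.two_ne_zero hk
  intro j
  induction j using Nat.strong_induction_on with
  | _ j ih =>
    intro hj
    have hd1 : (Finsupp.single 0 1 + Finsupp.single 1 j : Fin 2 →₀ ℕ) ≠ Finsupp.single 0 2 := by
      intro hcon
      have := DFunLike.congr_fun hcon 0
      simp [Finsupp.add_apply, Finsupp.single_apply] at this
    have hd2 : (Finsupp.single 0 1 + Finsupp.single 1 j : Fin 2 →₀ ℕ) ≠ Finsupp.single 1 p := by
      intro hcon
      have := DFunLike.congr_fun hcon 0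
      simp [Finsupp.add_apply, Finsupp.single_apply] at this
    have h := coeffF p t key (Finsupp.single 0 1 + Finsupp.single 1 j)
      (by simp [Finsupp.add_apply, Finsupp.single_apply]; omega) hd1
    rw [if_neg hd2] at h
    -- h : 0 = ∑ over antidiagonal
    have hne : (Finsupp.single (0:Fin 2) 1, Finsupp.single (1:Fin 2) j)
        ≠ (Finsupp.single (1:Fin 2) j, Finsupp.single (0:Fin 2) 1) := by
      intro hcon
      have := DFunLike.congr_fun (congrArg Prod.fst hcon) 0
      simp [Finsupp.single_apply] at this
    have hsub : ({(Finsupp.single (0:Fin 2) 1, Finsupp.single (1:Fin 2) j),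
        (Finsupp.single (1:Fin 2) j, Finsupp.single (0:Fin 2) 1)} :
        Finset ((Fin 2 →₀ ℕ) × (Fin 2 →₀ ℕ)))
        ⊆ Finset.HasAntidiagonal.antidiagonal (Finsupp.single 0 1 + Finsupp.single 1 j) := by
      intro x hx
      rw [Finset.mem_insert, Finset.mem_singleton] at hx
      rcases hx with hx | hx <;> rw [Finset.HasAntidiagonal.mem_antidiagonal, hx]
      exact add_comm _ _
    rw [← Finset.sum_subset hsub ?hz, Finset.sum_insert (by
        rw [Finset.mem_singleton]; exact hne), Finset.sum_singleton] at h
    case hz =>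
      intro x hx hnx
      rw [Finset.HasAntidiagonal.mem_antidiagonal] at hx
      rw [Finset.mem_insert, Finset.mem_singleton] at hnx
      push_neg at hnx
      obtain ⟨hn1, hn2⟩ := hnx
      have h0 := DFunLike.congr_fun hx 0
      have h1 := DFunLike.congr_fun hx 1
      simp only [Finsupp.add_apply, Finsupp.single_apply] at h0 h1
      norm_num at h0 h1
      rcases Nat.lt_or_ge (x.1 0) 1 with hc | hc
      · -- x.1 0 = 0, so x.1 = single 1 (x.1 1)
        have e1 : x.1 = Finsupp.single 1 (x.1 1) := fin2_eq_single1 _ (by omega)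
        rcases Nat.lt_or_ge (x.1 1) j with hlt | hge
        · rw [e1, ih _ hlt (by omega), zero_mul]
        · -- x.1 1 = j, so x.2 = single 0 1 : contradicts hn2
          exfalso; apply hn2
          have e2 : x.2 = Finsupp.single 0 1 := by
            rw [fin2_eq_single0 x.2 (by omega)]; congr 1; omega
          have e1' : x.1 = Finsupp.single 1 j := by rw [e1]; congr 1; omega
          exact Prod.ext e1' e2
      · -- x.1 0 = 1, x.2 0 = 0
        have e2 : x.2 = Finsupp.single 1 (x.2 1) := fin2_eq_single1 _ (by omega)
        rcases Nat.lt_or_ge (x.2 1) j with hlt | hge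
        · rw [e2, ih _ hlt (by omega), mul_zero]
        · exfalso; apply hn1
          have e1 : x.1 = Finsupp.single 0 1 := by
            rw [fin2_eq_single0 x.1 (by omega)]; congr 1; omega
          have e2' : x.2 = Finsupp.single 1 j := by rw [e2]; congr 1; omega
          exact Prod.ext e1 e2'
    -- h : 0 = a0 * b j + b j * a0
    have : 2 * (MvPowerSeries.coeff (Finsupp.single 0 1) t *
        MvPowerSeries.coeff (Finsupp.single 1 j) t) = 0 := by
      linear_combination -h
    rcases mul_eq_zero.mp this with hcon | hcon
    · exact absurd hcon h2
    · rcases mul_eq_zero.mp hcon with hcon2 | hcon2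
      · exact absurd hcon2 ha0
      · exact hcon2

end Test3

section Test4
variable {k : Type*} [Field k] (hk : ringChar k ≠ 2) (p : ℕ) (hp : 3 ≤ p)
  (t : MvPowerSeries (Fin 2) k)
  (key : ∀ d : Fin 2 →₀ ℕ, d 0 + d 1 ≤ p →
      MvPowerSeries.coeff d ((X 0) ^ 2 + (X 1) ^ p - t ^ 2) = 0)

include hk hp key in
lemma step_final : False := by
  classical
  have t0 := coeff_t0 p hp t key
  have bz := step_b hk p hp t key
  have hd1 : (Finsupp.single 1 p : Fin 2 →₀ ℕ) ≠ Finsupp.single 0 2 := by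
    intro hcon
    have := DFunLike.congr_fun hcon 1
    simp [Finsupp.single_apply] at this
    omega
  have h := coeffF p t key (Finsupp.single 1 p)
    (by simp [Finsupp.single_apply]) hd1
  rw [if_pos rfl] at h
  have hz : ∑ x ∈ Finset.HasAntidiagonal.antidiagonal (Finsupp.single (1:Fin 2) p),
      (coeff x.1 t) * (coeff x.2 t) = 0 := by
    apply Finset.sum_eq_zero
    intro x hx
    rw [Finset.HasAntidiagonal.mem_antidiagonal] at hx
    have h0 := DFunLike.congr_fun hx 0
    have h1 := DFunLike.congr_fun hx 1
    simp only [Finsupp.add_apply, Finsupp.single_apply] at h0 h1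
    norm_num at h0 h1
    have e1 : x.1 = Finsupp.single 1 (x.1 1) := fin2_eq_single1 _ (by omega)
    rcases Nat.lt_or_ge (x.1 1) p with hlt | hge
    · rw [e1, bz _ hlt, zero_mul]
    · have e2 : x.2 = 0 := fin2_eq_zero _ (by omega) (by omega)
      rw [e2, t0, mul_zero]
  rw [hz] at h
  exact one_ne_zero h

end Test4


/-- `sup_t ord(T₁² + T₂^p − t²) = p` : for every `t` the element `T₁²+T₂^p−t²` is not in
`m^(p+1)`, and for some `t` (namely `t = T₁`) it lies in `m^p`. -/
theorem sup_ord_dist_to_squares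
    {k : Type*} [Field k] (hk : ringChar k ≠ 2) (p : ℕ) (hp : 3 ≤ p) :
    (∀ t : MvPowerSeries (Fin 2) k,
      (MvPowerSeries.X 0) ^ 2 + (MvPowerSeries.X 1) ^ p - t ^ 2 ∉
        (IsLocalRing.maximalIdeal (MvPowerSeries (Fin 2) k)) ^ (p + 1)) ∧
    (∃ t : MvPowerSeries (Fin 2) k,
      (MvPowerSeries.X 0) ^ 2 + (MvPowerSeries.X 1) ^ p - t ^ 2 ∈
        (IsLocalRing.maximalIdeal (MvPowerSeries (Fin 2) k)) ^ p) := by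
  constructor
  · intro t H
    have key : ∀ d : Fin 2 →₀ ℕ, d 0 + d 1 ≤ p →
        MvPowerSeries.coeff d ((X 0) ^ 2 + (X 1) ^ p - t ^ 2) = 0 :=
      fun d hd => coeff_zero_of_mem_pow (p + 1) _ H d (by omega)
    exact step_final hk p hp t key
  · refine ⟨MvPowerSeries.X 0, ?_⟩
    have he : (X 0 : MvPowerSeries (Fin 2) k) ^ 2 + (X 1) ^ p - (X 0) ^ 2
        = (X 1 : MvPowerSeries (Fin 2) k) ^ p := by ring
    rw [he]
    apply Ideal.pow_mem_pow
    rw [IsLocalRing.mem_maximalIdeal, mem_nonunits_iff,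
      MvPowerSeries.isUnit_iff_constantCoeff, MvPowerSeries.constantCoeff_X]
    exact not_isUnit_zero
end

section
/- Let k be a field of characteristic ≠ 2, O = k[[T₁,T₂]] with maximal ideal m, and let p ≥ 3, k ≥ 3 be integers. With a_n = (−1)^{n−1}(2n−2)!/(2^{2n−1}(n−1)!n!) for n ≥ 1, a₀ = 1, set u_{p,k} = T₁^{2k−2} Σ_{i=0}^{k−1} a_i T₂^{ip} / T₁^{2i} (an element of O since ip ≥ 2i) and v_k = T₁^{2k−3}. Then u_{p,k}² − (T₁² + T₂^p)·v_k² ∈ m^{(p+2)k−4}. -/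
/-- Coefficients of the binomial series for `(1+u)^{1/2}`:
`a₀ = 1`, `a_n = (−1)^{n−1}(2n−2)!/(2^{2n−1}(n−1)!n!) = (−1)^{n−1} catalan(n−1)/2^{2n−1}`. -/
noncomputable def binomHalfCoef (k : Type*) [Field k] : ℕ → k
  | 0 => 1
  | n + 1 => (-1) ^ n * (catalan n : k) * ((2 : k) ^ (2 * n + 1))⁻¹

/-- `u_{p,k} = T₁^{2k−2} Σ_{i=0}^{k−1} a_i T₂^{ip}/T₁^{2i} ∈ k[[T₁,T₂]]`. -/
noncomputable def upk (k : Type*) [Field k] (p kk : ℕ) : MvPowerSeries (Fin 2) k :=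
  ∑ i ∈ Finset.range kk,
    MvPowerSeries.C (σ := Fin 2) (R := k) (binomHalfCoef k i) *
      (MvPowerSeries.X 0) ^ (2 * kk - 2 - 2 * i) * (MvPowerSeries.X 1) ^ (i * p)

open Finset

lemma binomHalfCoef_conv0 {k : Type*} [Field k] :
    ∑ ij ∈ Finset.HasAntidiagonal.antidiagonal 0, binomHalfCoef k ij.1 * binomHalfCoef k ij.2 = 1 := by
  simp [binomHalfCoef]

lemma binomHalfCoef_conv1 {k : Type*} [Field k] (h2 : (2:k) ≠ 0) :
    ∑ ij ∈ Finset.HasAntidiagonal.antidiagonal 1, binomHalfCoef k ij.1 * binomHalfCoef k ij.2 = 1 := by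
  rw [Finset.Nat.sum_antidiagonal_eq_sum_range_succ_mk]
  simp [Finset.sum_range_succ, binomHalfCoef]
  field_simp
  norm_num

lemma binomHalfCoef_conv {k : Type*} [Field k] (h2 : (2:k) ≠ 0) (n : ℕ) (hn : 2 ≤ n) :
    ∑ ij ∈ Finset.HasAntidiagonal.antidiagonal n, binomHalfCoef k ij.1 * binomHalfCoef k ij.2 = 0 := by
  obtain ⟨n, rfl⟩ : ∃ m, n = m + 2 := ⟨n - 2, by omega⟩
  rw [Finset.Nat.sum_antidiagonal_eq_sum_range_succ_mk]
  rw [Finset.sum_range_succ, Finset.sum_range_succ']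
  have key : ∀ i ∈ Finset.range (n+1),
      binomHalfCoef k (i+1) * binomHalfCoef k (n + 2 - (i+1)) =
      ((-1:k)^n * ((2:k)^(2*n+2))⁻¹) * ((catalan i * catalan (n - i) : ℕ) : k) := by
    intro i hi
    rw [Finset.mem_range] at hi
    rw [show n + 2 - (i+1) = (n - i) + 1 by omega]
    show ((-1:k) ^ i * (catalan i : k) * ((2 : k) ^ (2 * i + 1))⁻¹) *
        ((-1:k) ^ (n-i) * (catalan (n-i) : k) * ((2 : k) ^ (2 * (n-i) + 1))⁻¹) = _
    have e1 : (-1:k)^i * (-1:k)^(n-i) = (-1:k)^n := by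
      rw [← pow_add]; congr 1; omega
    have e2 : (2:k)^(2*i+1) * (2:k)^(2*(n-i)+1) = (2:k)^(2*n+2) := by
      rw [← pow_add]; congr 1; omega
    push_cast
    rw [← e1, ← e2, mul_inv]
    ring
  rw [Finset.sum_congr rfl key, ← Finset.mul_sum, ← Nat.cast_sum]
  rw [show ∑ i ∈ Finset.range (n+1), catalan i * catalan (n - i) = catalan (n+1) by
    rw [catalan_succ]; rw [Finset.sum_range]]
  have hred : ∀ x y : ℕ, binomHalfCoef k (x, y).1 * binomHalfCoef k (x, y).2
      = binomHalfCoef k x * binomHalfCoef k y := fun _ _ => rfl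
  rw [hred, hred, Nat.sub_self, Nat.sub_zero, show n + 1 + 1 = n + 2 from rfl]
  have hb0 : binomHalfCoef k 0 = 1 := rfl
  have hb : binomHalfCoef k (n+2)
      = (-1:k)^(n+1) * (catalan (n+1) : k) * ((2:k)^(2*(n+1)+1))⁻¹ := rfl
  rw [hb0, hb]
  have h2n : (2:k)^(2*n+2) ≠ 0 := pow_ne_zero _ h2
  have h2n' : (2:k)^(2*(n+1)+1) ≠ 0 := pow_ne_zero _ h2
  field_simp
  rw [show 2*(n+1)+1 = (2*n+2)+1 by omega]
  ring

lemma X_mem_maximalIdeal {k : Type*} [Field k] (s : Fin 2) :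
    (MvPowerSeries.X s : MvPowerSeries (Fin 2) k) ∈
      IsLocalRing.maximalIdeal (MvPowerSeries (Fin 2) k) := by
  rw [IsLocalRing.mem_maximalIdeal]
  intro hu
  have := MvPowerSeries.isUnit_iff_constantCoeff.mp hu
  simp at this

lemma monomial_mem_pow {k : Type*} [Field k] (c : k) (a b N : ℕ) (h : N ≤ a + b) :
    MvPowerSeries.C (σ := Fin 2) (R := k) c * (MvPowerSeries.X 0) ^ a * (MvPowerSeries.X 1) ^ b ∈
      (IsLocalRing.maximalIdeal (MvPowerSeries (Fin 2) k)) ^ N := by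
  apply Ideal.pow_le_pow_right h
  have : (MvPowerSeries.X 0 : MvPowerSeries (Fin 2) k) ^ a * (MvPowerSeries.X 1) ^ b ∈
      (IsLocalRing.maximalIdeal (MvPowerSeries (Fin 2) k)) ^ (a + b) := by
    rw [pow_add]
    exact Ideal.mul_mem_mul (Ideal.pow_mem_pow (X_mem_maximalIdeal 0) a)
      (Ideal.pow_mem_pow (X_mem_maximalIdeal 1) b)
  rw [mul_assoc]
  exact Ideal.mul_mem_left _ _ this

/-- With `v_k = T₁^{2k−3}`, one has `u_{p,k}² − (T₁²+T₂^p)·v_k² ∈ m^{(p+2)k−4}`. -/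
theorem approx_solution_order
    {k : Type*} [Field k] (hk : ringChar k ≠ 2) (p kk : ℕ) (hp : 3 ≤ p) (hkk : 3 ≤ kk) :
    (upk k p kk) ^ 2 -
        ((MvPowerSeries.X 0) ^ 2 + (MvPowerSeries.X 1) ^ p) *
          ((MvPowerSeries.X 0) ^ (2 * kk - 3)) ^ 2 ∈
      (IsLocalRing.maximalIdeal (MvPowerSeries (Fin 2) k)) ^ ((p + 2) * kk - 4) := by
  have h2 : (2:k) ≠ 0 := Ring.two_ne_zero hk
  set X0 : MvPowerSeries (Fin 2) k := MvPowerSeries.X 0 with hX0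
  set X1 : MvPowerSeries (Fin 2) k := MvPowerSeries.X 1 with hX1
  set a : ℕ → k := binomHalfCoef k with ha
  set F : ℕ × ℕ → MvPowerSeries (Fin 2) k := fun ij =>
    MvPowerSeries.C (σ := Fin 2) (R := k) (a ij.1 * a ij.2) *
      X0 ^ (4 * kk - 4 - 2 * (ij.1 + ij.2)) * X1 ^ ((ij.1 + ij.2) * p) with hF
  -- expand the square
  have hsq : (upk k p kk) ^ 2 = ∑ ij ∈ Finset.range kk ×ˢ Finset.range kk, F ij := by
    rw [sq, upk, Finset.sum_mul_sum, Finset.sum_product]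
    apply Finset.sum_congr rfl
    intro i hi
    apply Finset.sum_congr rfl
    intro j hj
    rw [Finset.mem_range] at hi hj
    have e : 2 * kk - 2 - 2 * i + (2 * kk - 2 - 2 * j) = 4 * kk - 4 - 2 * (i + j) := by omega
    simp only [hF, map_mul, ← e, pow_add, show (i+j)*p = i*p + j*p by ring]
    ring
  -- split
  rw [hsq, ← Finset.sum_filter_add_sum_filter_not (Finset.range kk ×ˢ Finset.range kk)
    (fun ij => ij.1 + ij.2 < kk) F]
  -- compute the low part
  have hlow : ∑ ij ∈ (Finset.range kk ×ˢ Finset.range kk).filter (fun ij => ij.1 + ij.2 < kk),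
      F ij = (X0 ^ 2 + X1 ^ p) * (X0 ^ (2 * kk - 3)) ^ 2 := by
    rw [← Finset.sum_fiberwise_of_maps_to (g := fun ij : ℕ × ℕ => ij.1 + ij.2)
      (t := Finset.range kk) (fun ij hij => by
        simp only [Finset.mem_filter] at hij
        exact Finset.mem_range.mpr hij.2) F]
    have hfib : ∀ n ∈ Finset.range kk,
        ∑ ij ∈ ((Finset.range kk ×ˢ Finset.range kk).filter
            (fun ij => ij.1 + ij.2 < kk)).filter (fun ij => ij.1 + ij.2 = n), F ij =
        MvPowerSeries.C (σ := Fin 2) (R := k)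
            (∑ ij ∈ Finset.HasAntidiagonal.antidiagonal n, a ij.1 * a ij.2) *
          (X0 ^ (4 * kk - 4 - 2 * n) * X1 ^ (n * p)) := by
      intro n hn
      rw [Finset.mem_range] at hn
      have hset : ((Finset.range kk ×ˢ Finset.range kk).filter
          (fun ij => ij.1 + ij.2 < kk)).filter (fun ij => ij.1 + ij.2 = n) =
          Finset.HasAntidiagonal.antidiagonal n := by
        ext ij
        simp only [Finset.mem_filter, Finset.mem_product, Finset.mem_range,
          Finset.HasAntidiagonal.mem_antidiagonal]
        omega
      rw [hset, map_sum, Finset.sum_mul]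
      apply Finset.sum_congr rfl
      intro ij hij
      rw [Finset.HasAntidiagonal.mem_antidiagonal] at hij
      rw [hF]
      simp only [hij]
      ring
    rw [Finset.sum_congr rfl hfib]
    rw [← Finset.sum_range_add_sum_Ico _ (show 2 ≤ kk by omega)]
    have hIco : ∑ n ∈ Finset.Ico 2 kk, MvPowerSeries.C (σ := Fin 2) (R := k)
        (∑ ij ∈ Finset.HasAntidiagonal.antidiagonal n, a ij.1 * a ij.2) *
        (X0 ^ (4 * kk - 4 - 2 * n) * X1 ^ (n * p)) = 0 := by
      apply Finset.sum_eq_zero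
      intro n hn
      rw [Finset.mem_Ico] at hn
      rw [ha, binomHalfCoef_conv h2 n hn.1, map_zero, zero_mul]
    rw [hIco, add_zero, Finset.sum_range_succ, Finset.sum_range_one]
    rw [ha, binomHalfCoef_conv0, binomHalfCoef_conv1 h2, map_one]
    rw [show (X0 ^ (2 * kk - 3)) ^ 2 = X0 ^ (4 * kk - 6) by
      rw [← pow_mul]; congr 1; omega]
    rw [show 4 * kk - 4 - 2 * 0 = 2 + (4 * kk - 6) by omega,
      show 4 * kk - 4 - 2 * 1 = 4 * kk - 6 by omega, pow_add, zero_mul, pow_zero, one_mul]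
    ring
  rw [hlow, add_sub_cancel_left]
  -- the high part lies in the power of the maximal ideal
  apply Ideal.sum_mem
  intro ij hij
  simp only [Finset.mem_filter, Finset.mem_product, Finset.mem_range, not_lt] at hij
  obtain ⟨⟨hi, hj⟩, hn⟩ := hij
  rw [hF]
  apply monomial_mem_pow
  -- (p+2)*kk - 4 ≤ (4*kk - 4 - 2*(i+j)) + (i+j)*p
  set n := ij.1 + ij.2 with hndef
  have hn2 : n ≤ 2 * kk - 2 := by omega
  have hs1 : 2 * n + 4 ≤ 4 * kk := by omega
  have hs2 : 4 ≤ (p + 2) * kk := by nlinarith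
  have hkn : (kk : ℤ) ≤ (n : ℤ) := by exact_mod_cast hn
  have hp2 : (2 : ℤ) ≤ (p : ℤ) := by exact_mod_cast (by omega : 2 ≤ p)
  zify [show (4:ℕ) ≤ 4 * kk by omega, show 2 * n ≤ 4 * kk - 4 by omega, hs2]
  nlinarith [mul_nonneg (sub_nonneg.2 hkn) (sub_nonneg.2 hp2)]
end

section
/- Let k be a field of characteristic ≠ 2 and O = k[[T₁,T₂]] with maximal ideal m. Define P(X,Y,Z) = X² − Z·Y² over O. For every even integer i = 2k−2 with k ≥ 3, there exist (u,v,z) ∈ O³ with P(u,v,z) ∈ m^{k²−4}, such that for every exact solution (x̄,ȳ,z̄) ∈ O³ of P(x̄,ȳ,z̄) = 0, at least one of u−x̄, v−ȳ, z−z̄ does not lie in m^{i+1}. (Take u = u_{k−2,k}, v = T₁^{2k−3}, z = T₁² + T₂^{k−2}.) -/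
open Finset MvPowerSeries

namespace ApproxFar

noncomputable section

variable {k : Type*} [Field k]

/-- The exponent `(a, b)` as a `Fin 2 →₀ ℕ`. -/
def ee (a b : ℕ) : Fin 2 →₀ ℕ := Finsupp.single 0 a + Finsupp.single 1 b

@[simp] lemma ee_apply0 (a b : ℕ) : ee a b 0 = a := by
  simp [ee, Finsupp.single_apply]

@[simp] lemma ee_apply1 (a b : ℕ) : ee a b 1 = b := by
  simp [ee, Finsupp.single_apply]

lemma eq_ee (d : Fin 2 →₀ ℕ) : d = ee (d 0) (d 1) := by
  ext i
  fin_cases i <;> simp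

lemma ee_add (a b a' b' : ℕ) : ee a b + ee a' b' = ee (a + a') (b + b') := by
  ext i; fin_cases i <;> simp

lemma ee_inj {a b a' b' : ℕ} (h : ee a b = ee a' b') : a = a' ∧ b = b' := by
  constructor
  · have := congrArg (fun d : Fin 2 →₀ ℕ => d 0) h; simpa using this
  · have := congrArg (fun d : Fin 2 →₀ ℕ => d 1) h; simpa using this

local notation "𝓜" => IsLocalRing.maximalIdeal (MvPowerSeries (Fin 2) k)

lemma mem_max_iff {f : MvPowerSeries (Fin 2) k} :
    f ∈ 𝓜 ↔ constantCoeff f = 0 := by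
  rw [IsLocalRing.mem_maximalIdeal, mem_nonunits_iff, MvPowerSeries.isUnit_iff_constantCoeff,
    isUnit_iff_ne_zero, not_not]

lemma coeff_eq_zero_of_mem_pow {N : ℕ} :
    ∀ {f : MvPowerSeries (Fin 2) k}, f ∈ 𝓜 ^ N →
      ∀ d : Fin 2 →₀ ℕ, d 0 + d 1 < N → (coeff d) f = 0 := by
  induction N with
  | zero => intro f _ d hd; omega
  | succ N ih =>
    intro f hf
    rw [pow_succ] at hf
    refine Submodule.mul_induction_on hf ?_ ?_
    · intro a ha b hb d hd
      rw [MvPowerSeries.coeff_mul]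
      refine Finset.sum_eq_zero fun p hp => ?_
      rw [Finset.HasAntidiagonal.mem_antidiagonal] at hp
      by_cases hq : p.2 0 + p.2 1 = 0
      · have h2 : p.2 = 0 := by
          ext i
          fin_cases i <;> simp <;> omega
        have : (coeff p.2) b = 0 := by
          rw [h2, MvPowerSeries.coeff_zero_eq_constantCoeff_apply]
          exact mem_max_iff.mp hb
        rw [this, mul_zero]
      · have hdeg : p.1 0 + p.1 1 < N := by
          have h0 : p.1 0 + p.2 0 = d 0 := by rw [← hp]; simp
          have h1 : p.1 1 + p.2 1 = d 1 := by rw [← hp]; simp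
          omega
        rw [ih ha p.1 hdeg, zero_mul]
    · intro a b ha hb d hd
      rw [map_add, ha d hd, hb d hd, add_zero]

lemma X_mem_max (i : Fin 2) : (X i : MvPowerSeries (Fin 2) k) ∈ 𝓜 := by
  rw [mem_max_iff, MvPowerSeries.constantCoeff_X]

lemma monomial_mem_pow (d : Fin 2 →₀ ℕ) (c : k) (N : ℕ) (h : N ≤ d 0 + d 1) :
    (monomial d c : MvPowerSeries (Fin 2) k) ∈ 𝓜 ^ N := by
  have hrepr : (monomial d c : MvPowerSeries (Fin 2) k)
      = C c * (X 0) ^ (d 0) * (X 1) ^ (d 1) := by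
    rw [mul_assoc, X_pow_eq, X_pow_eq, monomial_mul_monomial,
      ← monomial_zero_eq_C_apply, monomial_mul_monomial, one_mul, mul_one]
    congr 1
    conv_lhs => rw [eq_ee d]
    rw [ee, zero_add]
  rw [hrepr]
  have h1 : (X 0 : MvPowerSeries (Fin 2) k) ^ (d 0) * (X 1) ^ (d 1) ∈ 𝓜 ^ (d 0 + d 1) := by
    rw [pow_add]
    exact Ideal.mul_mem_mul (Ideal.pow_mem_pow (X_mem_max 0) _) (Ideal.pow_mem_pow (X_mem_max 1) _)
  rw [mul_assoc]
  exact Ideal.pow_le_pow_right h (Ideal.mul_mem_left _ _ h1)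


variable (k) in
/-- Coefficients of the formal square root of `1 + u`. -/
def bb : ℕ → k
  | 0 => 1
  | (n+1) => (2 : k)⁻¹ *
      ((if n = 0 then 1 else 0) -
        ∑ i ∈ (Finset.Ioo 0 (n+1)).attach, bb i.1 * bb (n+1-i.1))
  decreasing_by
  · have := (Finset.mem_Ioo.mp i.2).2; omega
  · have := (Finset.mem_Ioo.mp i.2).1; omega

lemma sum_bb (h2 : (2:k) ≠ 0) (d : ℕ) :
    ∑ i ∈ Finset.range (d+1), bb k i * bb k (d-i) =
      if d = 0 then 1 else if d = 1 then 1 else 0 := by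
  cases d with
  | zero => simp [bb]
  | succ e =>
    have hsplit : ∑ i ∈ Finset.range (e+2), bb k i * bb k (e+1-i) =
        bb k 0 * bb k (e+1) + (∑ i ∈ Finset.Ioo 0 (e+1), bb k i * bb k (e+1-i))
          + bb k (e+1) * bb k 0 := by
      rw [Finset.sum_range_succ, Finset.range_eq_Ico,
        Finset.sum_eq_sum_Ico_succ_bot (by omega : (0:ℕ) < e+1)]
      have hIoo : Finset.Ico 1 (e+1) = Finset.Ioo 0 (e+1) := by
        ext i; simp only [Finset.mem_Ico, Finset.mem_Ioo]; omega
      rw [hIoo]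
      simp only [Nat.sub_zero, Nat.sub_self]
    have hb0 : bb k 0 = 1 := by rw [bb]
    have hrec : bb k (e+1) = (2 : k)⁻¹ *
        ((if e = 0 then 1 else 0) - ∑ i ∈ Finset.Ioo 0 (e+1), bb k i * bb k (e+1-i)) := by
      rw [bb]
      rw [← Finset.sum_attach (Finset.Ioo 0 (e+1)) (fun i => bb k i * bb k (e+1-i))]
    have h2b : (2:k) * bb k (e+1) =
        (if e = 0 then 1 else 0) - ∑ i ∈ Finset.Ioo 0 (e+1), bb k i * bb k (e+1-i) := by
      rw [hrec, ← mul_assoc, mul_inv_cancel₀ h2, one_mul]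
    rcases Nat.eq_zero_or_pos e with he | he
    · subst he
      rw [if_pos rfl] at h2b
      rw [hsplit, hb0, one_mul, mul_one, if_neg (Nat.succ_ne_zero 0), if_pos rfl]
      linear_combination h2b
    · rw [if_neg (by omega : ¬ e = 0)] at h2b
      rw [hsplit, hb0, one_mul, mul_one, if_neg (Nat.succ_ne_zero e),
        if_neg (by omega : ¬ e+1 = 1)]
      linear_combination h2b

lemma monomial_mul_ee (a b a' b' : ℕ) (c c' : k) :
    (monomial (ee a b) c) * monomial (ee a' b') c'
      = monomial (ee (a+a') (b+b')) (c*c') := by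
  rw [monomial_mul_monomial, ee_add]

lemma part1 (h2 : (2:k) ≠ 0) (kk n M : ℕ) (hn : 1 ≤ n) (hM : 2*n ≤ M+1)
    (hdeg : ∀ d, n+1 ≤ d → d ≤ 2*n → kk^2 - 4 ≤ (2*M+2-2*d) + (kk-2)*d) :
    ∃ u : MvPowerSeries (Fin 2) k,
      u^2 - (monomial (ee 2 0) 1 + monomial (ee 0 (kk-2)) 1) * (monomial (ee M 0) 1)^2
        ∈ 𝓜 ^ (kk^2 - 4) := by
  refine ⟨∑ j ∈ range (n+1), monomial (ee (M+1-2*j) ((kk-2)*j)) (bb k j), ?_⟩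
  set F : ℕ → k → MvPowerSeries (Fin 2) k :=
    fun d c => monomial (ee (2*M+2-2*d) ((kk-2)*d)) c with hF
  set c : ℕ → k := fun d =>
    ∑ p ∈ ((range (n+1)) ×ˢ (range (n+1))).filter (fun p => p.1 + p.2 = d),
      bb k p.1 * bb k p.2 with hc
  have hcd : ∀ d, d ≤ n → c d = ∑ i ∈ range (d+1), bb k i * bb k (d-i) := by
    intro d hd
    rw [hc]
    refine Finset.sum_nbij' (i := fun p => p.1) (j := fun i => (i, d - i)) ?_ ?_ ?_ ?_ ?_
    · intro p hp
      simp only [Finset.mem_filter, Finset.mem_product, Finset.mem_range] at hp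
      simp only [Finset.mem_range]
      omega
    · intro i hi
      simp only [Finset.mem_range] at hi
      simp only [Finset.mem_filter, Finset.mem_product, Finset.mem_range]
      omega
    · intro p hp
      simp only [Finset.mem_filter, Finset.mem_product, Finset.mem_range] at hp
      ext <;> simp <;> omega
    · intro i hi; simp
    · intro p hp
      simp only [Finset.mem_filter, Finset.mem_product, Finset.mem_range] at hp
      have : d - p.1 = p.2 := by omega
      rw [this]
  have hsq : (∑ j ∈ range (n+1), monomial (ee (M+1-2*j) ((kk-2)*j)) (bb k j))^2
      = ∑ d ∈ range (2*n+1), F d (c d) := by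
    rw [pow_two, Finset.sum_mul_sum, ← Finset.sum_product']
    rw [← Finset.sum_fiberwise_of_maps_to (g := fun p : ℕ × ℕ => p.1 + p.2)
      (t := range (2*n+1)) (fun p hp => by
        simp only [Finset.mem_product, Finset.mem_range] at hp
        simp only [Finset.mem_range]; omega)]
    refine Finset.sum_congr rfl fun d _ => ?_
    refine Eq.trans (Finset.sum_congr rfl fun p hp => ?_)
      (map_sum (monomial (ee (2*M+2-2*d) ((kk-2)*d))) _ _).symm
    simp only [Finset.mem_filter, Finset.mem_product, Finset.mem_range] at hp
    rw [monomial_mul_ee]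
    obtain ⟨⟨hp1, hp2⟩, hpd⟩ := hp
    have h1 : (M+1-2*p.1) + (M+1-2*p.2) = 2*M+2-2*d := by omega
    have h2' : (kk-2)*p.1 + (kk-2)*p.2 = (kk-2)*d := by rw [← Nat.mul_add, hpd]
    rw [h1, h2']
  have hzv : (monomial (ee 2 0) 1 + monomial (ee 0 (kk-2)) 1)
      * (monomial (ee M 0) 1)^2 = F 0 1 + F 1 1 := by
    rw [pow_two, monomial_mul_ee, add_mul, monomial_mul_ee, monomial_mul_ee, hF]
    norm_num
    have e1 : 2 + (M+M) = 2*M+2 := by omega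
    have e2 : M+M = 2*M := by omega
    rw [e1, e2]
  rw [hsq, hzv]
  have h01 : range (2*n+1) = {0, 1} ∪ Finset.Ico 2 (2*n+1) := by
    ext i
    simp only [Finset.mem_range, Finset.mem_union, Finset.mem_insert,
      Finset.mem_singleton, Finset.mem_Ico]
    omega
  have hdisj : Disjoint ({0, 1} : Finset ℕ) (Finset.Ico 2 (2*n+1)) := by
    simp only [Finset.disjoint_left, Finset.mem_insert, Finset.mem_singleton, Finset.mem_Ico]
    rintro a (rfl | rfl) <;> omega
  rw [h01, Finset.sum_union hdisj, Finset.sum_pair (by omega : (0:ℕ) ≠ 1)]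
  have hc0 : c 0 = 1 := by
    rw [hcd 0 (by omega), sum_bb h2 0, if_pos rfl]
  have hc1 : c 1 = 1 := by
    rw [hcd 1 hn, sum_bb h2 1, if_neg (by omega), if_pos rfl]
  rw [hc0, hc1]
  have hcancel : F 0 1 + F 1 1 + (∑ d ∈ Finset.Ico 2 (2*n+1), F d (c d)) - (F 0 1 + F 1 1)
      = ∑ d ∈ Finset.Ico 2 (2*n+1), F d (c d) := by ring
  rw [hcancel]
  refine Ideal.sum_mem _ fun d hd => ?_
  rw [Finset.mem_Ico] at hd
  by_cases hdn : d ≤ n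
  · rw [hF]
    simp only
    rw [hcd d hdn, sum_bb h2 d, if_neg (by omega), if_neg (by omega), map_zero]
    exact zero_mem _
  · refine monomial_mem_pow _ _ _ ?_
    rw [ee_apply0, ee_apply1]
    exact hdeg d (by omega) (by omega)

lemma coeff_mul_ee (f g : MvPowerSeries (Fin 2) k) (a b : ℕ) :
    coeff (ee a b) (f * g) =
      ∑ p ∈ Finset.HasAntidiagonal.antidiagonal a ×ˢ Finset.HasAntidiagonal.antidiagonal b,
        coeff (ee p.1.1 p.2.1) f * coeff (ee p.1.2 p.2.2) g := by
  rw [MvPowerSeries.coeff_mul]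
  refine Finset.sum_nbij' (i := fun p => ((p.1 0, p.2 0), (p.1 1, p.2 1)))
    (j := fun p => (ee p.1.1 p.2.1, ee p.1.2 p.2.2)) ?_ ?_ ?_ ?_ ?_
  · intro p hp
    rw [Finset.HasAntidiagonal.mem_antidiagonal] at hp
    simp only [Finset.mem_product, Finset.HasAntidiagonal.mem_antidiagonal]
    constructor
    · have := congrArg (fun d : Fin 2 →₀ ℕ => d 0) hp; simpa using this
    · have := congrArg (fun d : Fin 2 →₀ ℕ => d 1) hp; simpa using this
  · intro p hp
    simp only [Finset.mem_product, Finset.HasAntidiagonal.mem_antidiagonal] at hp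
    rw [Finset.HasAntidiagonal.mem_antidiagonal, ee_add, hp.1, hp.2]
  · intro p hp
    dsimp only
    rw [← eq_ee p.1, ← eq_ee p.2]
  · intro p hp
    simp
  · intro p hp
    dsimp only
    rw [← eq_ee p.1, ← eq_ee p.2]

def nu (kk : ℕ) (d : Fin 2 →₀ ℕ) : ℕ := (kk-2) * d 0 + 2 * d 1

lemma nu_ee (kk a b : ℕ) : nu kk (ee a b) = (kk-2)*a + 2*b := by simp [nu]

/-- The weighted-homogeneous slice of weight `m` of a power series, specialized at `T₂ = 1`,
as a polynomial in `T₁`. -/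
def Phi (kk m : ℕ) (f : MvPowerSeries (Fin 2) k) : Polynomial k :=
  ∑ i ∈ range (m+1),
    Polynomial.C (if (kk-2)*i ≤ m ∧ 2 ∣ (m - (kk-2)*i)
      then coeff (ee i ((m - (kk-2)*i)/2)) f else 0) * Polynomial.X ^ i

lemma Phi_coeff (hkk : 3 ≤ kk) (m : ℕ) (f : MvPowerSeries (Fin 2) k) (i : ℕ) :
    (Phi kk m f).coeff i = if (kk-2)*i ≤ m ∧ 2 ∣ (m - (kk-2)*i)
      then coeff (ee i ((m - (kk-2)*i)/2)) f else 0 := by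
  rw [Phi, Polynomial.finset_sum_coeff]
  by_cases hi : i ≤ m
  · rw [Finset.sum_eq_single_of_mem i (Finset.mem_range.mpr (by omega))
      (fun j _ hj => by
        rw [Polynomial.coeff_C_mul, Polynomial.coeff_X_pow]
        rw [if_neg (Ne.symm hj), mul_zero])]
    rw [Polynomial.coeff_C_mul, Polynomial.coeff_X_pow, if_pos rfl, mul_one]
  · rw [Finset.sum_eq_zero (fun j hj => by
      rw [Finset.mem_range] at hj
      rw [Polynomial.coeff_C_mul, Polynomial.coeff_X_pow]
      rw [if_neg (show ¬ i = j by omega), mul_zero])]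
    obtain ⟨B, hB⟩ : ∃ t, (kk-2)*i = t := ⟨_, rfl⟩
    have hii : i ≤ B := hB ▸ Nat.le_mul_of_pos_left i (by omega)
    rw [hB, if_neg (by omega)]

/-- Low vanishing: all coefficients of weighted order `< a` vanish. -/
def LV (kk a : ℕ) (f : MvPowerSeries (Fin 2) k) : Prop :=
  ∀ d : Fin 2 →₀ ℕ, nu kk d < a → coeff d f = 0

lemma Phi_zero (kk m : ℕ) : Phi kk m (0 : MvPowerSeries (Fin 2) k) = 0 := by
  simp [Phi]

lemma Phi_eq_zero (hkk : 3 ≤ kk) {a m : ℕ} {f : MvPowerSeries (Fin 2) k}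
    (h : LV kk a f) (hm : m < a) : Phi kk m f = 0 := by
  ext i
  rw [Phi_coeff hkk, Polynomial.coeff_zero]
  split
  · next hcond =>
    obtain ⟨h1, h2⟩ := hcond
    apply h
    rw [nu_ee]
    obtain ⟨A, hA⟩ : ∃ t, (kk-2)*i = t := ⟨_, rfl⟩
    rw [hA] at h1 h2 ⊢
    omega
  · rfl

lemma LV_mul {kk a b : ℕ} {f g : MvPowerSeries (Fin 2) k}
    (hf : LV kk a f) (hg : LV kk b g) : LV kk (a+b) (f*g) := by
  intro d hd
  rw [MvPowerSeries.coeff_mul]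
  refine Finset.sum_eq_zero fun p hp => ?_
  rw [Finset.HasAntidiagonal.mem_antidiagonal] at hp
  have hnu : nu kk p.1 + nu kk p.2 = nu kk d := by
    rw [← hp]
    simp only [nu, Finsupp.add_apply]
    ring
  by_cases h1 : nu kk p.1 < a
  · rw [hf _ h1, zero_mul]
  · rw [hg _ (by omega), mul_zero]

lemma Phi_mul (hkk : 3 ≤ kk) {a b : ℕ} {f g : MvPowerSeries (Fin 2) k}
    (hf : LV kk a f) (hg : LV kk b g) :
    Phi kk (a+b) (f*g) = Phi kk a f * Phi kk b g := by
  ext n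
  rw [Phi_coeff hkk, Polynomial.coeff_mul]
  obtain ⟨An, hAn⟩ : ∃ t, (kk-2)*n = t := ⟨_, rfl⟩
  rw [hAn]
  by_cases hC : An ≤ a+b ∧ 2 ∣ (a+b - An)
  · rw [if_pos hC]
    rw [coeff_mul_ee, Finset.sum_product]
    refine Finset.sum_congr rfl fun q hq => ?_
    rw [Finset.HasAntidiagonal.mem_antidiagonal] at hq
    obtain ⟨A1, hA1⟩ : ∃ t, (kk-2)*q.1 = t := ⟨_, rfl⟩
    obtain ⟨A2, hA2⟩ : ∃ t, (kk-2)*q.2 = t := ⟨_, rfl⟩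
    have hlink : A1 + A2 = An := by rw [← hA1, ← hA2, ← hAn, ← Nat.mul_add, hq]
    by_cases H : A1 ≤ a ∧ 2 ∣ (a - A1) ∧ (a - A1)/2 ≤ (a+b-An)/2
    · obtain ⟨H1, H2, H3⟩ := H
      rw [Finset.sum_eq_single ((a-A1)/2, (a+b-An)/2 - (a-A1)/2)]
      · dsimp only
        rw [Phi_coeff hkk, Phi_coeff hkk, hA1, hA2,
          if_pos (by omega : A1 ≤ a ∧ 2 ∣ (a - A1)),
          if_pos (by omega : A2 ≤ b ∧ 2 ∣ (b - A2))]
        have hj2 : (b - A2)/2 = (a+b-An)/2 - (a-A1)/2 := by omega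
        rw [hj2]
      · rintro ⟨r1, r2⟩ hr hne
        rw [Finset.HasAntidiagonal.mem_antidiagonal] at hr
        dsimp only at hr hne ⊢
        rcases lt_trichotomy (A1 + 2*r1) a with h | h | h
        · rw [hf _ (by rw [nu_ee, hA1]; omega), zero_mul]
        · exfalso
          apply hne
          have h1 : r1 = (a-A1)/2 := by omega
          have h2' : r2 = (a+b-An)/2 - (a-A1)/2 := by omega
          rw [h1, h2']
        · rw [hg _ (by rw [nu_ee, hA2]; omega), mul_zero]
      · intro hnot
        exact absurd (Finset.HasAntidiagonal.mem_antidiagonal.mpr (by omega)) hnot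
    · have hz : ∀ r ∈ Finset.HasAntidiagonal.antidiagonal ((a+b-An)/2),
          coeff (ee q.1 r.1) f * coeff (ee q.2 r.2) g = 0 := by
        rintro ⟨r1, r2⟩ hr
        rw [Finset.HasAntidiagonal.mem_antidiagonal] at hr
        dsimp only at hr ⊢
        by_cases h1 : A1 + 2*r1 < a
        · rw [hf _ (by rw [nu_ee, hA1]; omega), zero_mul]
        · by_cases h2' : A2 + 2*r2 < b
          · rw [hg _ (by rw [nu_ee, hA2]; omega), mul_zero]
          · exact absurd (by omega : A1 ≤ a ∧ 2 ∣ (a - A1) ∧ (a - A1)/2 ≤ (a+b-An)/2) H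
      rw [Finset.sum_eq_zero hz]
      by_cases hA1c : A1 ≤ a ∧ 2 ∣ (a - A1)
      · by_cases hB1c : A2 ≤ b ∧ 2 ∣ (b - A2)
        · exact absurd (by omega : A1 ≤ a ∧ 2 ∣ (a - A1) ∧ (a - A1)/2 ≤ (a+b-An)/2) H
        · rw [Phi_coeff hkk (m := b), hA2, if_neg hB1c, mul_zero]
      · rw [Phi_coeff hkk (m := a), hA1, if_neg hA1c, zero_mul]
  · rw [if_neg hC]
    symm
    refine Finset.sum_eq_zero fun q hq => ?_
    rw [Finset.HasAntidiagonal.mem_antidiagonal] at hq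
    obtain ⟨A1, hA1⟩ : ∃ t, (kk-2)*q.1 = t := ⟨_, rfl⟩
    obtain ⟨A2, hA2⟩ : ∃ t, (kk-2)*q.2 = t := ⟨_, rfl⟩
    have hlink : A1 + A2 = An := by rw [← hA1, ← hA2, ← hAn, ← Nat.mul_add, hq]
    by_cases hA1c : A1 ≤ a ∧ 2 ∣ (a - A1)
    · by_cases hB1c : A2 ≤ b ∧ 2 ∣ (b - A2)
      · exact absurd (by omega : An ≤ a+b ∧ 2 ∣ (a+b - An)) hC
      · rw [Phi_coeff hkk (m := b), hA2, if_neg hB1c, mul_zero]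
    · rw [Phi_coeff hkk (m := a), hA1, if_neg hA1c, zero_mul]

lemma exists_ord (hkk : 3 ≤ kk) (f : MvPowerSeries (Fin 2) k) (hf : f ≠ 0) :
    ∃ m, LV kk m f ∧ Phi kk m f ≠ 0 := by
  classical
  have hex : ∃ m, ∃ d : Fin 2 →₀ ℕ, nu kk d = m ∧ coeff d f ≠ 0 := by
    by_contra h
    push_neg at h
    apply hf
    ext d
    have := h (nu kk d) d
    simpa using this rfl
  refine ⟨Nat.find hex, fun d hd => ?_, ?_⟩
  · by_contra hc
    exact Nat.find_min hex hd ⟨d, rfl, hc⟩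
  · obtain ⟨d, hd1, hd2⟩ := Nat.find_spec hex
    intro hPhi
    obtain ⟨A, hA⟩ : ∃ t, (kk-2)*(d 0) = t := ⟨_, rfl⟩
    have hnud : A + 2 * (d 1) = Nat.find hex := by
      rw [← hA, ← hd1]; rfl
    have : (Phi kk (Nat.find hex) f).coeff (d 0) = coeff d f := by
      rw [Phi_coeff hkk, hA, if_pos (by omega : A ≤ Nat.find hex ∧ 2 ∣ (Nat.find hex - A))]
      have hj : (Nat.find hex - A)/2 = d 1 := by omega
      rw [hj, ← eq_ee]
    rw [hPhi, Polynomial.coeff_zero] at this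
    exact hd2 this.symm

lemma two_ne_zero' (hk : ringChar k ≠ 2) : (2:k) ≠ 0 := by
  intro h
  have hdd : ringChar k ∣ 2 := ringChar.dvd (by exact_mod_cast h)
  rcases (Nat.dvd_prime Nat.prime_two).mp hdd with h1 | h1
  · exact CharP.ringChar_ne_one h1
  · exact hk h1

lemma poly_endgame (h2 : (2:k) ≠ 0) (p q : Polynomial k) (hq : q ≠ 0)
    (h : p * p = (Polynomial.X^2 + 1) * (q * q)) : False := by
  classical
  have hX1 : (Polynomial.X^2 + 1 : Polynomial k) ≠ 0 := fun hz => by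
    have := congrArg (fun r => Polynomial.coeff r 0) hz
    simp [Polynomial.coeff_X_pow] at this
  have hdvd : q ^ 2 ∣ p ^ 2 := ⟨Polynomial.X^2 + 1, by rw [pow_two, pow_two, h]; ring⟩
  have hqp : q ∣ p := (IsIntegrallyClosed.pow_dvd_pow_iff (two_ne_zero)).mp hdvd
  obtain ⟨t, ht⟩ := hqp
  have hqq : q * q ≠ 0 := mul_ne_zero hq hq
  have hkey : (q*q) * (t*t) = (q*q) * (Polynomial.X^2 + 1) := by
    have : (q*q)*(t*t) = (q*t)*(q*t) := by ring
    rw [this, ← ht, h]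
    ring
  have ht2 : t * t = Polynomial.X^2 + 1 := mul_left_cancel₀ hqq hkey
  have ht0 : t ≠ 0 := by
    intro h0
    rw [h0, mul_zero] at ht2
    exact hX1 ht2.symm
  have hdeg : t.natDegree = 1 := by
    have h1 : (t*t).natDegree = t.natDegree + t.natDegree := Polynomial.natDegree_mul ht0 ht0
    have h2' : (Polynomial.X^2 + 1 : Polynomial k).natDegree = 2 := by
      rw [← Polynomial.C_1, Polynomial.natDegree_X_pow_add_C]
    rw [ht2, h2'] at h1
    omega
  have hlead : t.coeff 1 ≠ 0 := by
    have := Polynomial.leadingCoeff_ne_zero.mpr ht0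
    rwa [Polynomial.leadingCoeff, hdeg] at this
  have e1 : (t*t).coeff 1 = 2 * (t.coeff 0 * t.coeff 1) := by
    rw [Polynomial.coeff_mul, Finset.Nat.sum_antidiagonal_eq_sum_range_succ_mk]
    rw [Finset.sum_range_succ, Finset.sum_range_succ, Finset.sum_range_zero]
    norm_num
    ring
  have c1 : (Polynomial.X^2 + 1 : Polynomial k).coeff 1 = 0 := by
    simp [Polynomial.coeff_X_pow, Polynomial.coeff_one]
  have c0 : (Polynomial.X^2 + 1 : Polynomial k).coeff 0 = 1 := by
    simp [Polynomial.coeff_X_pow, Polynomial.coeff_one]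
  have ht0c : t.coeff 0 = 0 := by
    rw [ht2, c1] at e1
    rcases mul_eq_zero.mp e1.symm with h' | h'
    · exact absurd h' h2
    · rcases mul_eq_zero.mp h' with h'' | h''
      · exact h''
      · exact absurd h'' hlead
  have e0 : (t*t).coeff 0 = t.coeff 0 * t.coeff 0 := Polynomial.mul_coeff_zero t t
  rw [ht2, c0, ht0c, mul_zero] at e0
  exact one_ne_zero e0

lemma w_slice {kk : ℕ} (hkk : 3 ≤ kk) (w : MvPowerSeries (Fin 2) k)
    (hw : ∀ d : Fin 2 →₀ ℕ, d 0 + d 1 < 2*kk-2+1 → coeff d w =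
      coeff d (monomial (ee 2 0) 1 + monomial (ee 0 (kk-2)) (1:k))) :
    LV kk (2*(kk-2)) w ∧ Phi kk (2*(kk-2)) w = Polynomial.X^2 + 1 := by
  have hz : ∀ a b : ℕ, a + b < 2*kk-2+1 → coeff (ee a b) w
      = (if a = 2 ∧ b = 0 then (1:k) else 0) + (if a = 0 ∧ b = kk-2 then (1:k) else 0) := by
    intro a b hab
    rw [hw (ee a b) (by simpa using hab), map_add,
      MvPowerSeries.coeff_monomial, MvPowerSeries.coeff_monomial]
    have h1 : (ee a b = ee 2 0) ↔ (a = 2 ∧ b = 0) :=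
      ⟨fun h => ee_inj h, fun ⟨ha, hb⟩ => by rw [ha, hb]⟩
    have h2 : (ee a b = ee 0 (kk-2)) ↔ (a = 0 ∧ b = kk-2) :=
      ⟨fun h => ee_inj h, fun ⟨ha, hb⟩ => by rw [ha, hb]⟩
    rw [if_congr h1 rfl rfl, if_congr h2 rfl rfl]
  have hLV : LV kk (2*(kk-2)) w := by
    intro d hd
    obtain ⟨A, hA⟩ : ∃ t, (kk-2) * (d 0) = t := ⟨_, rfl⟩
    have hnud : nu kk d = A + 2 * (d 1) := by rw [nu, hA]
    rw [hnud] at hd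
    have hd0 : d 0 ≤ 1 := by
      by_contra hc
      push_neg at hc
      have : 2*(kk-2) ≤ (kk-2) * (d 0) := by
        calc 2*(kk-2) = (kk-2)*2 := by ring
        _ ≤ (kk-2)*(d 0) := Nat.mul_le_mul_left _ hc
      omega
    have hd1 : d 1 ≤ kk-3 := by
      have hA0 : A ≤ kk-2 := by
        rw [← hA]
        calc (kk-2) * (d 0) ≤ (kk-2) * 1 := Nat.mul_le_mul_left _ hd0
        _ = kk-2 := by ring
      omega
    rw [eq_ee d, hz (d 0) (d 1) (by omega)]
    have hne1 : ¬ (d 0 = 2 ∧ d 1 = 0) := by omega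
    have hne2 : ¬ (d 0 = 0 ∧ d 1 = kk-2) := by
      rintro ⟨ha, hb⟩
      omega
    rw [if_neg hne1, if_neg hne2, add_zero]
  refine ⟨hLV, ?_⟩
  ext i
  rw [Phi_coeff hkk]
  rcases i with _ | _ | _ | i
  · have hcond : (kk-2)*0 ≤ 2*(kk-2) ∧ 2 ∣ (2*(kk-2) - (kk-2)*0) := by
      constructor
      · simp
      · simp only [Nat.mul_zero, Nat.sub_zero]
        exact ⟨kk-2, rfl⟩
    rw [if_pos hcond]
    have hj : (2*(kk-2) - (kk-2)*0)/2 = kk-2 := by simp only [Nat.mul_zero, Nat.sub_zero]; omega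
    rw [hj, hz 0 (kk-2) (by omega), if_neg (by omega), if_pos ⟨rfl, rfl⟩]
    simp [Polynomial.coeff_X_pow, Polynomial.coeff_one]
  · have hrhs : (Polynomial.X^2 + 1 : Polynomial k).coeff 1 = 0 := by
      simp [Polynomial.coeff_X_pow, Polynomial.coeff_one]
    rw [hrhs]
    split
    · next hcond =>
      obtain ⟨hc1, hc2⟩ := hcond
      rw [Nat.mul_one] at hc2 ⊢
      have hjb : (2*(kk-2) - (kk-2))/2 ≤ kk-2 := by omega
      rw [hz 1 _ (by omega), if_neg (by omega), if_neg (by omega), add_zero]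
    · rfl
  · have hcond : (kk-2)*2 ≤ 2*(kk-2) ∧ 2 ∣ (2*(kk-2) - (kk-2)*2) := by
      constructor
      · omega
      · have : 2*(kk-2) - (kk-2)*2 = 0 := by omega
        rw [this]
        exact ⟨0, rfl⟩
    rw [if_pos hcond]
    have hj : (2*(kk-2) - (kk-2)*2)/2 = 0 := by omega
    rw [hj, hz 2 0 (by omega), if_pos ⟨rfl, rfl⟩, if_neg (by omega)]
    simp [Polynomial.coeff_X_pow, Polynomial.coeff_one]
  · have hcond : ¬ ((kk-2)*(i+3) ≤ 2*(kk-2) ∧ 2 ∣ (2*(kk-2) - (kk-2)*(i+3))) := by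
      rintro ⟨hc1, -⟩
      have : (kk-2)*3 ≤ (kk-2)*(i+3) := Nat.mul_le_mul_left _ (by omega)
      omega
    rw [if_neg hcond]
    have : (i+3) ≠ 2 := by omega
    simp [Polynomial.coeff_X_pow, Polynomial.coeff_one, this]

end

end ApproxFar

open Finset MvPowerSeries ApproxFar in
/-- For every even `i = 2k−2` (`k ≥ 3`) there is an approximate solution `(u,v,z)` of
`P = X² − ZY²` to order `k²−4` which is not congruent mod `m^{i+1}` to any exact solution. -/
theorem approx_solution_far_from_exact
    {k : Type*} [Field k] (hk : ringChar k ≠ 2) (kk : ℕ) (hkk : 3 ≤ kk) :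
    ∃ u v z : MvPowerSeries (Fin 2) k,
      u ^ 2 - z * v ^ 2 ∈
          (IsLocalRing.maximalIdeal (MvPowerSeries (Fin 2) k)) ^ (kk ^ 2 - 4) ∧
      ∀ x y w : MvPowerSeries (Fin 2) k, x ^ 2 - w * y ^ 2 = 0 →
        ¬ (u - x ∈ (IsLocalRing.maximalIdeal (MvPowerSeries (Fin 2) k)) ^ (2 * kk - 2 + 1) ∧
           v - y ∈ (IsLocalRing.maximalIdeal (MvPowerSeries (Fin 2) k)) ^ (2 * kk - 2 + 1) ∧
           z - w ∈ (IsLocalRing.maximalIdeal (MvPowerSeries (Fin 2) k)) ^ (2 * kk - 2 + 1)) := by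
  classical
  have h2 : (2:k) ≠ 0 := two_ne_zero' hk
  -- the approximate solution
  obtain ⟨u, hu⟩ := part1 h2 kk (if kk = 3 then 1 else kk-1) (2*kk-3)
    (by split_ifs <;> omega) (by split_ifs <;> omega)
    (by
      intro d hd1 hd2
      by_cases h3 : kk = 3
      · subst h3
        rw [if_pos rfl] at hd1 hd2
        have : d = 2 := by omega
        subst this
        norm_num
      · rw [if_neg h3] at hd1 hd2
        have h4 : 4 ≤ kk := by omega
        obtain ⟨P, hP⟩ : ∃ t, kk*kk = t := ⟨_, rfl⟩
        obtain ⟨B, hB⟩ : ∃ t, (kk-4)*d = t := ⟨_, rfl⟩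
        have hBC : P - 4*kk ≤ B := by
          rw [← hB, ← hP]
          calc kk*kk - 4*kk = (kk-4)*kk := (Nat.sub_mul kk 4 kk).symm
          _ ≤ (kk-4)*d := Nat.mul_le_mul_left _ (by omega)
        have hlink : (kk-2)*d = B + 2*d := by
          rw [← hB]
          have h5 : kk-2 = (kk-4)+2 := by omega
          rw [h5, Nat.add_mul]
        have hpow : kk^2 = P := by rw [← hP]; ring
        rw [hpow, hlink]
        omega)
  refine ⟨u, monomial (ee (2*kk-3) 0) 1,
    monomial (ee 2 0) 1 + monomial (ee 0 (kk-2)) 1, hu, ?_⟩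
  rintro x y w hxyw ⟨hux, hvy, hwz⟩
  -- coefficient agreement
  have hy : ∀ d : Fin 2 →₀ ℕ, d 0 + d 1 < 2*kk-2+1 →
      coeff d y = coeff d (monomial (ee (2*kk-3) 0) (1:k)) := by
    intro d hd
    have h0 := coeff_eq_zero_of_mem_pow hvy d hd
    rw [map_sub, sub_eq_zero] at h0
    exact h0.symm
  have hwc : ∀ d : Fin 2 →₀ ℕ, d 0 + d 1 < 2*kk-2+1 →
      coeff d w = coeff d (monomial (ee 2 0) 1 + monomial (ee 0 (kk-2)) (1:k)) := by
    intro d hd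
    have h0 := coeff_eq_zero_of_mem_pow hwz d hd
    rw [map_sub, sub_eq_zero] at h0
    exact h0.symm
  have hy0 : y ≠ 0 := by
    intro h0
    have hcy := hy (ee (2*kk-3) 0) (by simp; omega)
    rw [h0, map_zero, MvPowerSeries.coeff_monomial_same] at hcy
    exact one_ne_zero hcy.symm
  obtain ⟨hLVw, hPhiw⟩ := w_slice hkk w hwc
  have hX1 : (Polynomial.X^2 + 1 : Polynomial k) ≠ 0 := fun hz => by
    have := congrArg (fun r => Polynomial.coeff r 0) hz
    simp [Polynomial.coeff_X_pow, Polynomial.coeff_one] at this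
  obtain ⟨my, hLVy, hPy⟩ := exists_ord hkk y hy0
  have hxx : x*x = w*(y*y) := by linear_combination hxyw
  have hx0 : x ≠ 0 := by
    intro h0
    have heq : w*(y*y) = 0 := by rw [← hxx, h0, mul_zero]
    have hsl : Phi kk (2*(kk-2) + (my+my)) (w*(y*y))
        = (Polynomial.X^2+1) * (Phi kk my y * Phi kk my y) := by
      rw [Phi_mul hkk hLVw (LV_mul hLVy hLVy), Phi_mul hkk hLVy hLVy, hPhiw]
    rw [heq, Phi_zero] at hsl
    exact (mul_ne_zero hX1 (mul_ne_zero hPy hPy)) hsl.symm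
  obtain ⟨mx, hLVx, hPx⟩ := exists_ord hkk x hx0
  have hslx : Phi kk (mx+mx) (x*x) = Phi kk mx x * Phi kk mx x := Phi_mul hkk hLVx hLVx
  have hslw : Phi kk (2*(kk-2) + (my+my)) (w*(y*y))
      = (Polynomial.X^2+1) * (Phi kk my y * Phi kk my y) := by
    rw [Phi_mul hkk hLVw (LV_mul hLVy hLVy), Phi_mul hkk hLVy hLVy, hPhiw]
  have hEq : mx + mx = 2*(kk-2) + (my+my) := by
    by_contra hne
    rcases Nat.lt_or_ge (mx+mx) (2*(kk-2)+(my+my)) with hlt | hge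
    · have h2' : LV kk (2*(kk-2)+(my+my)) (x*x) := by
        rw [hxx]
        exact LV_mul hLVw (LV_mul hLVy hLVy)
      rw [Phi_eq_zero hkk h2' hlt] at hslx
      exact mul_ne_zero hPx hPx hslx.symm
    · have hlt' : 2*(kk-2)+(my+my) < mx+mx := by omega
      have h2' : LV kk (mx+mx) (w*(y*y)) := by
        rw [← hxx]
        exact LV_mul hLVx hLVx
      rw [Phi_eq_zero hkk h2' hlt'] at hslw
      exact (mul_ne_zero hX1 (mul_ne_zero hPy hPy)) hslw.symm
  have hfinal : Phi kk mx x * Phi kk mx x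
      = (Polynomial.X^2+1) * (Phi kk my y * Phi kk my y) := by
    rw [← hslx, hxx, hEq, hslw]
  exact poly_endgame h2 _ _ hPy hfinal
end

section
/- Let k be a field of characteristic ≠ 2 and O = k[[T₁,T₂]] with maximal ideal m. Let β : ℕ → ℕ be any function with the Artin approximation property for P(X,Y,Z) = X² − ZY²: for all i ∈ ℕ and (x,y,z) ∈ O³, if P(x,y,z) ∈ m^{β(i)+1} then there exists (x̄,ȳ,z̄) ∈ O³ with P(x̄,ȳ,z̄) = 0 and x−x̄, y−ȳ, z−z̄ ∈ m^{i+1}. Then β(i) ≥ i²/4 − 5 for all i ≥ 1. In particular β is not bounded above by any affine function of i. -/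
open MvPowerSeries Finsupp

namespace ArtinNotAffine

variable {k : Type*} [Field k]

local notation "𝕆" => MvPowerSeries (Fin 2) k
local notation "𝕄" => IsLocalRing.maximalIdeal (MvPowerSeries (Fin 2) k)

lemma degree_fin2 (d : Fin 2 →₀ ℕ) : d.degree = d 0 + d 1 := by
  rw [Finsupp.degree_eq_sum, Fin.sum_univ_two]

lemma fin2_decomp (d : Fin 2 →₀ ℕ) : d = single 0 (d 0) + single 1 (d 1) := by
  ext j
  have : j = 0 ∨ j = 1 := by omega
  rcases this with rfl | rfl <;> simp [Finsupp.single_apply]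

/-! ### The maximal ideal and orders -/

lemma X_mem_max (s : Fin 2) : (X s : 𝕆) ∈ 𝕄 := by
  rw [IsLocalRing.mem_maximalIdeal]
  intro h
  rw [MvPowerSeries.isUnit_iff_constantCoeff] at h
  simp [MvPowerSeries.constantCoeff_X] at h

lemma one_le_order_of_mem {f : 𝕆} (hf : f ∈ 𝕄) : (1 : ℕ∞) ≤ f.order := by
  have h0 : MvPowerSeries.constantCoeff f = 0 := by
    by_contra h
    exact (IsLocalRing.mem_maximalIdeal f).mp hf
      (MvPowerSeries.isUnit_iff_constantCoeff.mpr (isUnit_iff_ne_zero.mpr h))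
  have := MvPowerSeries.nat_le_order (R := k) (f := f) (n := 1) ?_
  · exact_mod_cast this
  · intro d hd
    have : d.degree = 0 := by omega
    rw [Finsupp.degree_eq_zero_iff] at this
    subst this
    simpa [MvPowerSeries.coeff_zero_eq_constantCoeff] using h0

/-- The ideal of power series of order at least `n`. -/
def ordI (n : ℕ) : Ideal 𝕆 where
  carrier := {f | (n : ℕ∞) ≤ f.order}
  zero_mem' := by simp [MvPowerSeries.order_zero]
  add_mem' := by
    intro a b ha hb
    exact le_trans (le_min ha hb) (MvPowerSeries.min_order_le_add)
  smul_mem' := by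
    intro r f hf
    simp only [smul_eq_mul, Set.mem_setOf_eq]
    calc (n : ℕ∞) ≤ f.order := hf
      _ ≤ r.order + f.order := (le_add_self : f.order ≤ r.order + f.order)
      _ ≤ (r * f).order := MvPowerSeries.le_order_mul

lemma pow_max_le_ordI (n : ℕ) : 𝕄 ^ n ≤ ordI (k := k) n := by
  induction n with
  | zero =>
    intro f _
    show ((0:ℕ) : ℕ∞) ≤ f.order
    simp
  | succ n ih =>
    rw [pow_succ]
    refine Ideal.mul_le.mpr fun f hf g hg => ?_
    have h1 : (n : ℕ∞) ≤ f.order := ih hf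
    have h2 : (1 : ℕ∞) ≤ g.order := one_le_order_of_mem hg
    show ((n + 1 : ℕ) : ℕ∞) ≤ (f * g).order
    calc ((n + 1 : ℕ) : ℕ∞) = (n : ℕ∞) + 1 := by push_cast; rfl
      _ ≤ f.order + g.order := add_le_add h1 h2
      _ ≤ (f * g).order := MvPowerSeries.le_order_mul

lemma coeff_eq_zero_of_mem_pow {f : 𝕆} {n : ℕ} (hf : f ∈ 𝕄 ^ n) {d : Fin 2 →₀ ℕ}
    (hd : d.degree < n) : MvPowerSeries.coeff d f = 0 := by
  have h := pow_max_le_ordI n hf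
  exact MvPowerSeries.coeff_of_lt_order (lt_of_lt_of_le (by exact_mod_cast hd) h)

lemma X_pow_mul_X_pow_mem (a b n : ℕ) (h : n ≤ a + b) :
    (X 0 : 𝕆) ^ a * (X 1 : 𝕆) ^ b ∈ 𝕄 ^ n := by
  refine Ideal.pow_le_pow_right h ?_
  rw [pow_add]
  exact Ideal.mul_mem_mul (Ideal.pow_mem_pow (X_mem_max 0) a)
    (Ideal.pow_mem_pow (X_mem_max 1) b)

/-! ### The reduction mod `T₁` ring hom -/

/-- The ring hom `k[[T₁,T₂]] → k[[T₂]]` given by `T₁ ↦ 0`. -/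
noncomputable def phi : MvPowerSeries (Fin 2) k →+* PowerSeries k where
  toFun f := PowerSeries.mk fun t => MvPowerSeries.coeff (single 1 t) f
  map_one' := by
    ext t
    simp only [PowerSeries.coeff_mk, MvPowerSeries.coeff_one, PowerSeries.coeff_one,
      Finsupp.single_eq_zero]
  map_mul' f g := by
    classical
    ext t
    rw [PowerSeries.coeff_mk, PowerSeries.coeff_mul, MvPowerSeries.coeff_mul,
      Finsupp.antidiagonal_single, Finset.sum_map]
    refine Finset.sum_congr rfl fun p _ => ?_
    simp [Function.Embedding.coe_prodMap, PowerSeries.coeff_mk]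
  map_zero' := by
    ext t
    simp [PowerSeries.coeff_mk]
  map_add' f g := by
    ext t
    simp [PowerSeries.coeff_mk]

lemma coeff_phi (f : 𝕆) (t : ℕ) :
    PowerSeries.coeff t (phi f) = MvPowerSeries.coeff (single 1 t) f := by
  simp [phi, PowerSeries.coeff_mk]

lemma coeff_X0_pow_mul (n : ℕ) (g : 𝕆) (d : Fin 2 →₀ ℕ) :
    MvPowerSeries.coeff d ((X 0 : 𝕆) ^ n * g) =
      if single 0 n ≤ d then MvPowerSeries.coeff (d - single 0 n) g else 0 := by
  classical
  rw [MvPowerSeries.X_pow_eq, MvPowerSeries.coeff_monomial_mul]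
  split_ifs <;> simp

lemma exists_X0_pow_mul {f : 𝕆} (hf : f ≠ 0) :
    ∃ (n : ℕ) (g : 𝕆), f = (X 0 : 𝕆) ^ n * g ∧ phi g ≠ 0 := by
  classical
  have hex : ∃ n : ℕ, ∃ b : ℕ, MvPowerSeries.coeff (single 0 n + single 1 b) f ≠ 0 := by
    by_contra h
    push_neg at h
    apply hf
    ext d
    rw [fin2_decomp d]
    simpa using h (d 0) (d 1)
  obtain ⟨b, hb⟩ := Nat.find_spec hex
  set n := Nat.find hex with hn
  refine ⟨n, fun d => MvPowerSeries.coeff (d + single 0 n) f, ?_, ?_⟩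
  · ext d
    erw [coeff_X0_pow_mul]
    split_ifs with h
    · show MvPowerSeries.coeff d f = MvPowerSeries.coeff (d - single 0 n + single 0 n) f
      rw [tsub_add_cancel_of_le h]
    · rw [Finsupp.single_le_iff] at h
      push_neg at h
      have := Nat.find_min hex (m := d 0) h
      push_neg at this
      have hd := this (d 1)
      rw [← fin2_decomp d] at hd
      exact hd
  · intro h0
    apply hb
    have := congrArg (PowerSeries.coeff b) h0
    erw [coeff_phi] at this
    show MvPowerSeries.coeff (single 0 n + single 1 b) f = 0
    rw [add_comm]
    exact this

lemma X0_shift_cancel {a : ℕ} {u v : 𝕆} (h : (X 0 : 𝕆) ^ a * u = (X 0 : 𝕆) ^ a * v) :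
    u = v := by
  ext d
  have hc := congrArg (MvPowerSeries.coeff (d + single 0 a)) h
  rw [coeff_X0_pow_mul, coeff_X0_pow_mul, if_pos, if_pos, add_tsub_cancel_right] at hc
  · exact hc
  · exact self_le_add_left _ _
  · exact self_le_add_left _ _

lemma phi_eq_zero_of_lt {a b : ℕ} {u v : 𝕆} (h : (X 0 : 𝕆) ^ a * u = (X 0 : 𝕆) ^ b * v)
    (hab : a < b) : phi u = 0 := by
  ext t
  rw [coeff_phi]
  have hc := congrArg (MvPowerSeries.coeff (single 0 a + single 1 t)) h
  rw [coeff_X0_pow_mul, coeff_X0_pow_mul, if_pos (self_le_add_right _ _),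
    add_tsub_cancel_left, if_neg] at hc
  · simpa using hc
  · rw [Finsupp.single_le_iff]
    simp only [Finsupp.coe_add, Pi.add_apply, Finsupp.single_eq_same]
    rw [Finsupp.single_eq_of_ne (by decide)]
    omega

lemma X0_exp_eq {a b : ℕ} {u v : 𝕆} (h : (X 0 : 𝕆) ^ a * u = (X 0 : 𝕆) ^ b * v)
    (hu : phi u ≠ 0) (hv : phi v ≠ 0) : a = b := by
  rcases lt_trichotomy a b with hab | hab | hab
  · exact absurd (phi_eq_zero_of_lt h hab) hu
  · exact hab
  · exact absurd (phi_eq_zero_of_lt h.symm hab) hv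

/-! ### The key obstruction -/

lemma key {c : ℕ} (hodd : Odd c) {x' y' z' : 𝕆}
    (E : x' ^ 2 = z' * y' ^ 2) (hy : y' ≠ 0)
    (hz : ∀ t, t ≤ c → MvPowerSeries.coeff (single 1 t) z' = if t = c then 1 else 0) :
    False := by
  obtain ⟨n, g, rfl, hg⟩ := exists_X0_pow_mul hy
  have hphz : phi z' ≠ 0 := by
    intro h0
    have := congrArg (PowerSeries.coeff c) h0
    rw [coeff_phi, hz c le_rfl] at this
    simpa using this
  have hw : phi (z' * g ^ 2) ≠ 0 := by
    rw [map_mul, map_pow]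
    exact mul_ne_zero hphz (pow_ne_zero _ hg)
  have E' : x' ^ 2 = (X 0 : 𝕆) ^ (2 * n) * (z' * g ^ 2) := by
    rw [E]; ring
  have hx' : x' ≠ 0 := by
    intro h0
    rw [h0] at E'
    have : (X 0 : 𝕆) ^ (2 * n) * (z' * g ^ 2) = (X 0 : 𝕆) ^ (2 * n) * 0 := by
      rw [mul_zero, ← E']; ring
    exact hw (by rw [X0_shift_cancel this, map_zero])
  obtain ⟨m, f, rfl, hf⟩ := exists_X0_pow_mul hx'
  have E'' : (X 0 : 𝕆) ^ (2 * m) * f ^ 2 = (X 0 : 𝕆) ^ (2 * n) * (z' * g ^ 2) := by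
    rw [← E']; ring
  have hf2 : phi (f ^ 2) ≠ 0 := by
    rw [map_pow]; exact pow_ne_zero _ hf
  have hmn : 2 * m = 2 * n := X0_exp_eq E'' hf2 hw
  rw [hmn] at E''
  have hfin : f ^ 2 = z' * g ^ 2 := X0_shift_cancel E''
  have hPhi : (phi f) ^ 2 = phi z' * (phi g) ^ 2 := by
    rw [← map_pow, ← map_pow, ← map_mul, hfin]
  -- orders in k[[T₂]]
  have horder : (phi z').order = (c : ℕ∞) := by
    rw [PowerSeries.order_eq_nat]
    constructor
    · rw [coeff_phi, hz c le_rfl]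
      simp
    · intro t ht
      rw [coeff_phi, hz t ht.le, if_neg ht.ne]
  have hOf : (phi f).order ≠ ⊤ := by rw [ne_eq, PowerSeries.order_eq_top]; exact hf
  have hOg : (phi g).order ≠ ⊤ := by rw [ne_eq, PowerSeries.order_eq_top]; exact hg
  have heq : (phi f).order + (phi f).order = (c : ℕ∞) + ((phi g).order + (phi g).order) := by
    have h1 : ((phi f) ^ 2).order = (phi f).order + (phi f).order := by
      rw [pow_two, PowerSeries.order_mul]
    have h2 : (phi z' * (phi g) ^ 2).order = (phi z').order + ((phi g).order + (phi g).order) := by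
      rw [PowerSeries.order_mul, pow_two, PowerSeries.order_mul]
    rw [← h1, hPhi, h2, horder]
  lift (phi f).order to ℕ using hOf with a
  lift (phi g).order to ℕ using hOg with b
  have : a + a = c + (b + b) := by exact_mod_cast heq
  obtain ⟨r, hr⟩ := hodd
  omega

/-! ### The approximate square root polynomial -/

lemma homog_cast {p : MvPolynomial (Fin 2) k} {n m : ℕ} (h : p.IsHomogeneous n) (e : n = m) :
    p.IsHomogeneous m := e ▸ h

lemma isHomog_iff {p : MvPolynomial (Fin 2) k} {n : ℕ} :
    p.IsHomogeneous n ↔ ∀ d, MvPolynomial.coeff d p ≠ 0 → d.degree = n := by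
  constructor
  · intro h d hd
    have := h hd
    rw [Finsupp.degree_eq_weight_one]; exact this
  · intro h d hd
    have : Finsupp.degree d = n := h d hd
    rwa [Finsupp.degree_eq_weight_one] at this

set_option maxHeartbeats 1000000 in
lemma sqrt_poly (h2 : (2 : k) ≠ 0) (q' : ℕ) :
    ∃ A B : MvPolynomial (Fin 2) k,
      A.IsHomogeneous (q' + 1) ∧ MvPolynomial.coeff (single 1 (q' + 1)) A = 1 ∧
      B.IsHomogeneous q' ∧
      A ^ 2 = (MvPolynomial.X 1 : MvPolynomial (Fin 2) k) ^ (2 * q' + 2) +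
        (MvPolynomial.X 0) * (MvPolynomial.X 1) ^ (2 * q' + 1) + (MvPolynomial.X 0) ^ (q' + 2) * B := by
  classical
  induction q' with
  | zero =>
    refine ⟨MvPolynomial.X 1 + MvPolynomial.C (2⁻¹ : k) * MvPolynomial.X 0, MvPolynomial.C ((2⁻¹ : k) * 2⁻¹), ?_, ?_, ?_, ?_⟩
    · exact (MvPolynomial.isHomogeneous_X _ _).add (MvPolynomial.isHomogeneous_C_mul_X _ _)
    · rw [MvPolynomial.coeff_add, MvPolynomial.coeff_C_mul, MvPolynomial.coeff_X',
        MvPolynomial.coeff_X', if_pos rfl, if_neg (by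
          rw [Finsupp.single_eq_single_iff]; simp)]
      ring
    · exact MvPolynomial.isHomogeneous_C _ _
    · have hC : (MvPolynomial.C (2⁻¹ : k) : MvPolynomial (Fin 2) k) * 2 = 1 := by
        rw [← map_ofNat (MvPolynomial.C : k →+* MvPolynomial (Fin 2) k) 2, ← map_mul,
          inv_mul_cancel₀ h2, map_one]
      have hCsq : (MvPolynomial.C ((2⁻¹ : k) * 2⁻¹) : MvPolynomial (Fin 2) k)
          = MvPolynomial.C (2⁻¹ : k) * MvPolynomial.C (2⁻¹ : k) := map_mul _ _ _
      linear_combination (MvPolynomial.X 0 : MvPolynomial (Fin 2) k) * (MvPolynomial.X 1) * hC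
        - (MvPolynomial.X 0 : MvPolynomial (Fin 2) k) ^ 2 * hCsq
  | succ q' ih =>
    obtain ⟨A, B, hA, hAc, hB, hE⟩ := ih
    set b : k := MvPolynomial.coeff (single 1 q') B with hb
    set c1 : k := 2⁻¹ * b with hc1
    -- the divisible remainder
    have hCC : (MvPolynomial.C (2 * c1) : MvPolynomial (Fin 2) k) = 2 * MvPolynomial.C c1 := by
      rw [map_mul, map_ofNat]
    have hC1sq : (MvPolynomial.C (c1 * c1) : MvPolynomial (Fin 2) k) = MvPolynomial.C c1 * MvPolynomial.C c1 :=
      map_mul _ _ _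
    set D : MvPolynomial (Fin 2) k :=
      (MvPolynomial.X 1) ^ 2 * B - MvPolynomial.C (2 * c1) * ((MvPolynomial.X 1) * A) + MvPolynomial.C (c1 * c1) * (MvPolynomial.X 0) ^ (q' + 2) with hD
    have hDhom : D.IsHomogeneous (q' + 2) := by
      refine MvPolynomial.IsHomogeneous.add (MvPolynomial.IsHomogeneous.sub
        (homog_cast ((MvPolynomial.isHomogeneous_X_pow 1 2).mul hB) (by omega))
        (homog_cast ((MvPolynomial.isHomogeneous_C _ _).mul ((MvPolynomial.isHomogeneous_X _ 1).mul hA)) (by omega)))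
        (homog_cast ((MvPolynomial.isHomogeneous_C _ _).mul (MvPolynomial.isHomogeneous_X_pow 0 (q' + 2))) (by omega))
    have hcoeffD : ∀ t : ℕ, MvPolynomial.coeff (single 1 t) D = 0 := by
      intro t
      by_cases ht : t = q' + 2
      · subst ht
        have e1 : MvPolynomial.coeff (single 1 (q' + 2)) ((MvPolynomial.X 1 : MvPolynomial (Fin 2) k) ^ 2 * B)
            = b := by
          rw [MvPolynomial.X_pow_eq_monomial,
            show (single 1 (q' + 2) : Fin 2 →₀ ℕ) = single 1 2 + single 1 q' by
              rw [← Finsupp.single_add]; congr 1; omega,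
            MvPolynomial.coeff_monomial_mul, one_mul]
        have e2 : MvPolynomial.coeff (single 1 (q' + 2))
            ((MvPolynomial.X 1 : MvPolynomial (Fin 2) k) * A) = 1 := by
          rw [show (single 1 (q' + 2) : Fin 2 →₀ ℕ) = single 1 1 + single 1 (q' + 1) by
              rw [← Finsupp.single_add]; congr 1; omega,
            MvPolynomial.coeff_X_mul, hAc]
        have e3 : MvPolynomial.coeff (single 1 (q' + 2))
            ((MvPolynomial.X 0 : MvPolynomial (Fin 2) k) ^ (q' + 2)) = 0 := by
          rw [MvPolynomial.coeff_single_X_pow]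
          simp
        rw [hD, MvPolynomial.coeff_add, MvPolynomial.coeff_sub, e1, MvPolynomial.coeff_C_mul,
          MvPolynomial.coeff_C_mul, e2, e3, mul_one, mul_zero, add_zero, hc1,
          ← mul_assoc, mul_inv_cancel₀ h2, one_mul, sub_self]
      · refine hDhom.coeff_eq_zero ?_
        rw [degree_fin2]
        simp only [Finsupp.single_apply, if_pos, if_neg]
        simp only [show ((1:Fin 2) = 0) = False by simp, show ((1:Fin 2) = 1) = True by simp,
          if_true, if_false]
        omega
    have hmod : MvPolynomial.modMonomial D (single 0 1) = 0 := by
      apply MvPolynomial.ext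
      intro d
      rw [MvPolynomial.coeff_zero]
      by_cases hle : (single 0 1 : Fin 2 →₀ ℕ) ≤ d
      · rw [MvPolynomial.coeff_modMonomial_of_le _ hle]
      · rw [MvPolynomial.coeff_modMonomial_of_not_le _ hle]
        have hd0 : d 0 = 0 := by
          rw [Finsupp.single_le_iff] at hle
          omega
        have hdd : d = single 1 (d 1) := by
          conv_lhs => rw [fin2_decomp d]
          rw [hd0]
          simp
        rw [hdd]
        exact hcoeffD (d 1)
    set B' : MvPolynomial (Fin 2) k := MvPolynomial.divMonomial D (single 0 1) with hB'
    have hXB' : (MvPolynomial.X 0 : MvPolynomial (Fin 2) k) * B' = D := by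
      have := MvPolynomial.divMonomial_add_modMonomial_single D 0
      rwa [hmod, add_zero] at this
    have hB'hom : B'.IsHomogeneous (q' + 1) := by
      rw [isHomog_iff]
      intro d hd
      rw [hB', MvPolynomial.coeff_divMonomial] at hd
      have := (isHomog_iff.mp hDhom) _ hd
      rw [degree_fin2] at this ⊢
      simp only [Finsupp.coe_add, Pi.add_apply, Finsupp.single_apply] at this
      simp only [show ((0:Fin 2) = 0) = True by simp, show ((0:Fin 2) = 1) = False by simp,
        if_true, if_false] at this
      omega
    refine ⟨MvPolynomial.X 1 * A - MvPolynomial.C c1 * (MvPolynomial.X 0) ^ (q' + 2), B', ?_, ?_, hB'hom, ?_⟩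
    · exact MvPolynomial.IsHomogeneous.sub (homog_cast ((MvPolynomial.isHomogeneous_X _ 1).mul hA) (by omega))
        (homog_cast ((MvPolynomial.isHomogeneous_C _ _).mul (MvPolynomial.isHomogeneous_X_pow 0 (q' + 2))) (by omega))
    · have t1 : MvPolynomial.coeff (single 1 (q' + 1 + 1))
          ((MvPolynomial.X 1 : MvPolynomial (Fin 2) k) * A) = 1 := by
        rw [show (single 1 (q' + 1 + 1) : Fin 2 →₀ ℕ) = single 1 1 + single 1 (q' + 1) by
            rw [← Finsupp.single_add]; congr 1; omega,
          MvPolynomial.coeff_X_mul, hAc]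
      have t2 : MvPolynomial.coeff (single 1 (q' + 1 + 1))
          ((MvPolynomial.X 0 : MvPolynomial (Fin 2) k) ^ (q' + 2)) = 0 := by
        rw [MvPolynomial.coeff_single_X_pow]
        simp
      rw [MvPolynomial.coeff_sub, MvPolynomial.coeff_C_mul, t1, t2, mul_zero, sub_zero]
    · linear_combination (MvPolynomial.X 1 : MvPolynomial (Fin 2) k) ^ 2 * hE
        - (MvPolynomial.X 0 : MvPolynomial (Fin 2) k) ^ (q' + 2) * hXB'
        + ((MvPolynomial.X 1 : MvPolynomial (Fin 2) k) * A * (MvPolynomial.X 0) ^ (q' + 2)) * hCC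
        - (MvPolynomial.X 0 : MvPolynomial (Fin 2) k) ^ (2 * q' + 4) * hC1sq

/-! ### Main bound -/

set_option maxHeartbeats 1600000 in
lemma main_bound (h2 : (2 : k) ≠ 0) (β : ℕ → ℕ)
    (hβ : ∀ (i : ℕ) (x y z : MvPowerSeries (Fin 2) k),
      x ^ 2 - z * y ^ 2 ∈ 𝕄 ^ (β i + 1) →
      ∃ x' y' z' : MvPowerSeries (Fin 2) k, x' ^ 2 - z' * y' ^ 2 = 0 ∧
        x - x' ∈ 𝕄 ^ (i + 1) ∧ y - y' ∈ 𝕄 ^ (i + 1) ∧ z - z' ∈ 𝕄 ^ (i + 1)) :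
    ∀ i : ℕ, 1 ≤ i → (i : ℚ) ^ 2 / 4 - 5 ≤ (β i : ℚ) := by
  classical
  intro i hi
  by_cases hi4 : i ≤ 4
  · have h4 : (i : ℚ) ≤ 4 := by exact_mod_cast hi4
    have hb0 : (0 : ℚ) ≤ (β i : ℚ) := by positivity
    nlinarith
  push_neg at hi4
  by_contra hlt
  push_neg at hlt
  set q' : ℕ := (i - 1) / 2 - 1 with hq'
  have hq1 : 1 ≤ q' := by omega
  have hc_le : 2 * q' + 3 ≤ i := by omega
  have hi_le : i ≤ 2 * q' + 4 := by omega
  -- numerical bound on β i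
  have hNN : β i + 1 ≤ 2 + ((2 * q' + 3) * (q' + 2) + 2 * q') := by
    have hcast : (i : ℚ) ≤ 2 * (q' : ℚ) + 4 := by exact_mod_cast hi_le
    have hsq : (i : ℚ) ^ 2 ≤ (2 * (q' : ℚ) + 4) ^ 2 := by
      have : (0 : ℚ) ≤ (i : ℚ) := by positivity
      nlinarith
    have h2' : (β i : ℚ) < ((2 + ((2 * q' + 3) * (q' + 2) + 2 * q') : ℕ) : ℚ) := by
      push_cast
      nlinarith
    have : β i < 2 + ((2 * q' + 3) * (q' + 2) + 2 * q') := by exact_mod_cast h2'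
    omega
  obtain ⟨A, B, hA, hAc, hB, hE⟩ := sqrt_poly h2 q'
  set σp : MvPolynomial (Fin 2) k →+* MvPowerSeries (Fin 2) k :=
    (MvPolynomial.eval₂Hom (MvPowerSeries.C)
      ![(X 1 : 𝕆) ^ (2 * q' + 3), (X 0 : 𝕆) ^ 2]) with hσp
  have hσX : σp (MvPolynomial.X 0) = (X 1 : 𝕆) ^ (2 * q' + 3) := by
    rw [hσp, MvPolynomial.eval₂Hom_X']
    simp
  have hσY : σp (MvPolynomial.X 1) = (X 0 : 𝕆) ^ 2 := by
    rw [hσp, MvPolynomial.eval₂Hom_X']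
    simp
  set x : 𝕆 := (X 0 : 𝕆) * σp A with hx
  set y : 𝕆 := (X 0 : 𝕆) ^ (2 * q' + 2) with hy
  set z : 𝕆 := (X 0 : 𝕆) ^ 2 + (X 1 : 𝕆) ^ (2 * q' + 3) with hz
  have herr : x ^ 2 - z * y ^ 2
      = (X 0 : 𝕆) ^ 2 * (((X 1 : 𝕆) ^ (2 * q' + 3)) ^ (q' + 2) * σp B) := by
    have hA2 : σp A ^ 2 = ((X 0 : 𝕆) ^ 2) ^ (2 * q' + 2)
        + (X 1 : 𝕆) ^ (2 * q' + 3) * ((X 0 : 𝕆) ^ 2) ^ (2 * q' + 1)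
        + ((X 1 : 𝕆) ^ (2 * q' + 3)) ^ (q' + 2) * σp B := by
      rw [← map_pow, hE]
      simp only [map_add, map_mul, map_pow, hσX, hσY]
    rw [hx, hy, hz, mul_pow, hA2]
    ring
  have hmem : x ^ 2 - z * y ^ 2 ∈ 𝕄 ^ (β i + 1) := by
    rw [herr]
    refine Ideal.pow_le_pow_right hNN ?_
    rw [pow_add]
    refine Ideal.mul_mem_mul (Ideal.pow_mem_pow (X_mem_max 0) 2) ?_
    rw [pow_add]
    refine Ideal.mul_mem_mul ?_ ?_
    · rw [← pow_mul]
      exact Ideal.pow_mem_pow (X_mem_max 1) _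
    · -- σp B ∈ 𝕄 ^ (2 q')
      rw [MvPolynomial.as_sum B, map_sum]
      refine Submodule.sum_mem _ fun v hv => ?_
      have hvd : v 0 + v 1 = q' := by
        have := (isHomog_iff.mp hB) v (by rwa [MvPolynomial.mem_support_iff] at hv)
        rwa [degree_fin2] at this
      rw [hσp, MvPolynomial.eval₂Hom_monomial]
      refine Ideal.mul_mem_left _ _ ?_
      rw [Finsupp.prod_pow, Fin.prod_univ_two]
      simp only [Matrix.cons_val_zero, Matrix.cons_val_one, Matrix.head_cons]
      rw [← pow_mul, ← pow_mul, mul_comm ((X 1 : 𝕆) ^ ((2 * q' + 3) * v 0))]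
      refine X_pow_mul_X_pow_mem _ _ _ ?_
      have h20 : 2 * v 0 ≤ (2 * q' + 3) * v 0 := Nat.mul_le_mul_right _ (by omega)
      omega
  obtain ⟨x', y', z', hsol, hxx', hyy', hzz'⟩ := hβ i x y z hmem
  have E : x' ^ 2 = z' * y' ^ 2 := sub_eq_zero.mp hsol
  have hy'1 : MvPowerSeries.coeff (single 0 (2 * q' + 2)) y' = 1 := by
    have h0 : MvPowerSeries.coeff (single 0 (2 * q' + 2)) (y - y') = 0 := by
      refine coeff_eq_zero_of_mem_pow hyy' ?_
      rw [degree_fin2]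
      simp only [Finsupp.single_apply]
      simp only [show ((0 : Fin 2) = 0) = True by simp, show ((0 : Fin 2) = 1) = False by simp,
        if_true, if_false]
      omega
    have hyc : MvPowerSeries.coeff (single 0 (2 * q' + 2)) y = 1 := by
      rw [hy, MvPowerSeries.X_pow_eq, MvPowerSeries.coeff_monomial_same]
    rw [map_sub, hyc, sub_eq_zero] at h0
    exact h0.symm
  have hy'ne : y' ≠ 0 := by
    intro h0
    rw [h0, map_zero] at hy'1
    simpa using hy'1
  have hz' : ∀ t, t ≤ 2 * q' + 3 →
      MvPowerSeries.coeff (single 1 t) z' = if t = 2 * q' + 3 then 1 else 0 := by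
    intro t ht
    have h0 : MvPowerSeries.coeff (single 1 t) (z - z') = 0 := by
      refine coeff_eq_zero_of_mem_pow hzz' ?_
      rw [degree_fin2]
      simp only [Finsupp.single_apply]
      simp only [show ((1 : Fin 2) = 0) = False by simp, show ((1 : Fin 2) = 1) = True by simp,
        if_true, if_false]
      omega
    have hne1 : (single 1 t : Fin 2 →₀ ℕ) ≠ single 0 2 := by
      intro hcontra
      have := DFunLike.congr_fun hcontra 0
      simp [Finsupp.single_apply] at this
    have hzc : MvPowerSeries.coeff (single 1 t) z = if t = 2 * q' + 3 then 1 else 0 := by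
      rw [hz, map_add, MvPowerSeries.X_pow_eq, MvPowerSeries.X_pow_eq,
        MvPowerSeries.coeff_monomial, MvPowerSeries.coeff_monomial, if_neg hne1, zero_add]
      by_cases hcase : t = 2 * q' + 3
      · subst hcase
        rw [if_pos rfl, if_pos rfl]
      · rw [if_neg (fun hcontra => hcase (Finsupp.single_injective 1 hcontra)),
          if_neg hcase]
    rw [map_sub, hzc, sub_eq_zero] at h0
    exact h0.symm
  exact key ⟨q' + 1, by ring⟩ E hy'ne hz'

end ArtinNotAffine

/-- Any function `β` with the Artin approximation property for `P = X² − ZY²` over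
`k[[T₁,T₂]]` (`char k ≠ 2`) satisfies `β(i) ≥ i²/4 − 5` for `i ≥ 1`; in particular `β`
is not bounded above by any affine function. -/
theorem artin_function_not_affine
    {k : Type*} [Field k] (hk : ringChar k ≠ 2) (β : ℕ → ℕ)
    (hβ : ∀ (i : ℕ) (x y z : MvPowerSeries (Fin 2) k),
      x ^ 2 - z * y ^ 2 ∈
          (IsLocalRing.maximalIdeal (MvPowerSeries (Fin 2) k)) ^ (β i + 1) →
      ∃ x' y' z' : MvPowerSeries (Fin 2) k, x' ^ 2 - z' * y' ^ 2 = 0 ∧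
        x - x' ∈ (IsLocalRing.maximalIdeal (MvPowerSeries (Fin 2) k)) ^ (i + 1) ∧
        y - y' ∈ (IsLocalRing.maximalIdeal (MvPowerSeries (Fin 2) k)) ^ (i + 1) ∧
        z - z' ∈ (IsLocalRing.maximalIdeal (MvPowerSeries (Fin 2) k)) ^ (i + 1)) :
    (∀ i : ℕ, 1 ≤ i → (i : ℚ) ^ 2 / 4 - 5 ≤ (β i : ℚ)) ∧
    ¬ ∃ a b : ℕ, ∀ i : ℕ, β i ≤ a * i + b := by
  have h2 : (2 : k) ≠ 0 := by
    intro h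
    have hdvd : ringChar k ∣ 2 := (ringChar.spec k 2).mp (by exact_mod_cast h)
    rcases (Nat.dvd_prime Nat.prime_two).mp hdvd with h1 | h1
    · exact CharP.ringChar_ne_one h1
    · exact hk h1
  have main := ArtinNotAffine.main_bound h2 β hβ
  refine ⟨main, ?_⟩
  rintro ⟨a, b, hab⟩
  set i : ℕ := 4 * a + 4 * b + 21 with hi
  have h1 := main i (by omega)
  have h2' : (β i : ℚ) ≤ (a : ℚ) * i + b := by exact_mod_cast hab i
  have hicast : (i : ℚ) = 4 * a + 4 * b + 21 := by
    rw [hi]; push_cast; ring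
  rw [hicast] at h1 h2'
  nlinarith [sq_nonneg ((a : ℚ) + b), sq_nonneg ((a : ℚ) - b), sq_nonneg (a : ℚ), sq_nonneg (b : ℚ),
    Nat.cast_nonneg (α := ℚ) a, Nat.cast_nonneg (α := ℚ) b]
end

section
/- Let O = k[[T₁,...,T_N]] and let Q ∈ O[X] be a polynomial of degree d with homogenization P(X,Y) = Y^d·Q(X/Y) ∈ O[X,Y]. Suppose β : ℕ → ℕ is nondecreasing, (0,0) is the only zero of P in O², and ord(P(u,v)) ≤ β(min(ord u, ord v)) for all (u,v) ≠ (0,0) in O². Let x be a root of Q in the completion V̂ of the valuation ring V of O (with respect to the order valuation), with ord(x) ≥ 0. Then for all u, v ∈ O with v ≠ 0 and ord(u) ≥ ord(v): ord(u/v − x) ≤ β(ord(v)) − d·ord(v). -/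
open PowerSeries Finset

private lemma dvd_le_order {F : Type*} [Field F] (φ : PowerSeries F) (n : ℕ)
    (h : (PowerSeries.X : PowerSeries F) ^ n ∣ φ) : (n : ℕ∞) ≤ φ.order :=
  PowerSeries.nat_le_order φ n (fun i hi => PowerSeries.X_pow_dvd_iff.mp h i hi)

private lemma order_le_dvd {F : Type*} [Field F] (φ : PowerSeries F) (n : ℕ)
    (h : (n : ℕ∞) ≤ φ.order) : (PowerSeries.X : PowerSeries F) ^ n ∣ φ :=
  PowerSeries.X_pow_dvd_iff.mpr (fun m hm =>
    PowerSeries.coeff_of_lt_order m (lt_of_lt_of_le (by exact_mod_cast hm) h))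

/-- Let `O = k[[T₁,…,T_N]]`, `V̂ = F[[T]]` its "exceptional-divisor" completion, embedded by a
ring map `ι` extending the `m`-adic order (hypothesis `hι`).  Let `Q ∈ O[X]` of degree `d`
with homogenization `P(X,Y) = Σ_i Q_i X^i Y^{d−i}` whose only zero in `O²` is `(0,0)`, and let
`β` be nondecreasing with `ord(P(u,v)) ≤ β(min(ord u, ord v))` for `(u,v) ≠ (0,0)`.  If `x ∈ V̂`
is a root of `Q` (so `ord x ≥ 0`), then for all `u, v ∈ O` with `v ≠ 0` and `ord u ≥ ord v`,
`ord(u/v − x) ≤ β(ord v) − d·ord v`, i.e. `ord(ι u − x·ι v) + d·ord v ≤ β(ord v) + ord v`. -/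
theorem diophantine_bound_of_artin_bound
    {k F : Type*} [Field k] [Field F] {N : ℕ}
    (ι : MvPowerSeries (Fin N) k →+* PowerSeries F)
    (hι : ∀ (f : MvPowerSeries (Fin N) k) (n : ℕ),
      f ∈ (IsLocalRing.maximalIdeal (MvPowerSeries (Fin N) k)) ^ n ↔
        (PowerSeries.X : PowerSeries F) ^ n ∣ ι f)
    (Q : Polynomial (MvPowerSeries (Fin N) k)) (d : ℕ) (hd : Q.natDegree = d)
    (β : ℕ → ℕ) (hβ : Monotone β)
    (hzero : ∀ u v : MvPowerSeries (Fin N) k,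
      (∑ i ∈ Finset.range (d + 1), Q.coeff i * u ^ i * v ^ (d - i)) = 0 → u = 0 ∧ v = 0)
    (hbound : ∀ (u v : MvPowerSeries (Fin N) k) (n : ℕ),
      min (PowerSeries.order (ι u)) (PowerSeries.order (ι v)) = (n : ℕ∞) →
      PowerSeries.order (ι (∑ i ∈ Finset.range (d + 1), Q.coeff i * u ^ i * v ^ (d - i))) ≤
        (β n : ℕ∞))
    (x : PowerSeries F) (hx : Polynomial.eval₂ ι x Q = 0) :
    ∀ (u v : MvPowerSeries (Fin N) k) (nv : ℕ), v ≠ 0 →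
      PowerSeries.order (ι v) = (nv : ℕ∞) →
      PowerSeries.order (ι v) ≤ PowerSeries.order (ι u) →
      PowerSeries.order (ι u - x * ι v) + ((d * nv : ℕ) : ℕ∞) ≤
        ((β nv + nv : ℕ) : ℕ∞) := by
  intro u v nv hv hnv hle
  set a := ι u with ha
  set b := ι v with hb
  -- X^nv divides b and a
  have hXb : (X : PowerSeries F) ^ nv ∣ b := order_le_dvd b nv (le_of_eq hnv.symm)
  have hXa : (X : PowerSeries F) ^ nv ∣ a := order_le_dvd a nv (hnv ▸ hle)
  -- evaluation of Q at x is zero, as a sum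
  have h0 : (∑ i ∈ Finset.range (d + 1), ι (Q.coeff i) * x ^ i) = 0 := by
    have := Polynomial.eval₂_eq_sum_range (p := Q) ι x
    rw [hx, hd] at this
    exact this.symm
  -- the auxiliary series W
  set W : PowerSeries F := ∑ i ∈ Finset.range (d + 1),
      ι (Q.coeff i) * ((∑ j ∈ Finset.range i, a ^ j * (x * b) ^ (i - 1 - j)) * b ^ (d - i))
    with hW
  -- the key factorization
  have key : ι (∑ i ∈ Finset.range (d + 1), Q.coeff i * u ^ i * v ^ (d - i))
      = (a - x * b) * W := by
    have hsum : ∀ i ∈ Finset.range (d + 1),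
        (a - x * b) * (ι (Q.coeff i) *
            ((∑ j ∈ Finset.range i, a ^ j * (x * b) ^ (i - 1 - j)) * b ^ (d - i)))
          + ι (Q.coeff i) * x ^ i * b ^ d
        = ι (Q.coeff i) * a ^ i * b ^ (d - i) := by
      intro i hi
      have hid : i ≤ d := Nat.lt_succ_iff.mp (Finset.mem_range.mp hi)
      have hbd : b ^ d = b ^ i * b ^ (d - i) := by
        rw [← pow_add, Nat.add_sub_cancel' hid]
      have hg : (a - x * b) * (∑ j ∈ Finset.range i, a ^ j * (x * b) ^ (i - 1 - j))
          = a ^ i - (x * b) ^ i := by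
        rw [mul_comm]; exact geom_sum₂_mul a (x * b) i
      calc (a - x * b) * (ι (Q.coeff i) *
            ((∑ j ∈ Finset.range i, a ^ j * (x * b) ^ (i - 1 - j)) * b ^ (d - i)))
          + ι (Q.coeff i) * x ^ i * b ^ d
          = ι (Q.coeff i) * (((a - x * b) *
              (∑ j ∈ Finset.range i, a ^ j * (x * b) ^ (i - 1 - j))) * b ^ (d - i))
            + ι (Q.coeff i) * x ^ i * (b ^ i * b ^ (d - i)) := by rw [← hbd]; ring
        _ = ι (Q.coeff i) * ((a ^ i - (x * b) ^ i) * b ^ (d - i))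
            + ι (Q.coeff i) * x ^ i * (b ^ i * b ^ (d - i)) := by rw [hg]
        _ = ι (Q.coeff i) * a ^ i * b ^ (d - i) := by rw [mul_pow]; ring
    have hsum' := Finset.sum_congr rfl hsum
    rw [Finset.sum_add_distrib, ← Finset.mul_sum, ← Finset.sum_mul, h0, zero_mul,
      add_zero] at hsum'
    rw [map_sum]
    simp only [map_mul, map_pow]
    rw [← hsum', ← hW]
  -- the order bound on W
  have hWord : (((d - 1) * nv : ℕ) : ℕ∞) ≤ W.order := by
    apply dvd_le_order
    apply Finset.dvd_sum
    intro i hi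
    have hid : i ≤ d := Nat.lt_succ_iff.mp (Finset.mem_range.mp hi)
    rcases Nat.eq_zero_or_pos i with hi0 | hi1
    · subst hi0; simp
    · rw [Finset.sum_mul]
      apply Dvd.dvd.mul_left
      apply Finset.dvd_sum
      intro j hj
      have hji : j < i := Finset.mem_range.mp hj
      have hexp : (d - 1) * nv = j * nv + (i - 1 - j) * nv + (d - i) * nv := by
        rw [← Nat.add_mul, ← Nat.add_mul]; congr 1; omega
      rw [hexp, pow_add, pow_add]
      refine mul_dvd_mul (mul_dvd_mul ?_ ?_) ?_
      · rw [mul_comm j nv, pow_mul]; exact pow_dvd_pow_of_dvd hXa j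
      · rw [mul_comm _ nv, pow_mul]
        exact pow_dvd_pow_of_dvd (Dvd.dvd.mul_left hXb x) _
      · rw [mul_comm _ nv, pow_mul]; exact pow_dvd_pow_of_dvd hXb _
  -- apply the Artin-type bound
  have hmin : min (PowerSeries.order a) (PowerSeries.order b) = (nv : ℕ∞) := by
    rw [min_eq_right hle, hnv]
  have hB := hbound u v nv hmin
  rw [key, PowerSeries.order_mul] at hB
  -- d = 0 is impossible
  rcases Nat.eq_zero_or_pos d with hd0 | hd1
  · exfalso
    subst hd0
    have : W = 0 := by simp [hW]
    rw [this, PowerSeries.order_eq_top.mpr rfl, add_top] at hB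
    simp at hB
  · have h1 : PowerSeries.order (a - x * b) + (((d - 1) * nv : ℕ) : ℕ∞) + (nv : ℕ∞)
        ≤ ((β nv : ℕ) : ℕ∞) + (nv : ℕ∞) :=
      add_le_add_left (le_trans (add_le_add_right hWord _) hB) _
    calc PowerSeries.order (a - x * b) + ((d * nv : ℕ) : ℕ∞)
        = PowerSeries.order (a - x * b) + (((d - 1) * nv : ℕ) : ℕ∞) + (nv : ℕ∞) := by
          rw [add_assoc, ← Nat.cast_add]
          congr 2
          obtain ⟨e, rfl⟩ := Nat.exists_eq_succ_of_ne_zero hd1.ne'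
          simp [Nat.succ_sub_one, Nat.succ_mul]
      _ ≤ ((β nv : ℕ) : ℕ∞) + (nv : ℕ∞) := h1
      _ = ((β nv + nv : ℕ) : ℕ∞) := by rw [Nat.cast_add]
end

section
/- Let O = k[[T₁,...,T_N]] and x ∈ V̂ (the completion of the valuation ring V dominating O) be algebraic over the fraction field K of O with x ∉ K. Then there exists a function γ : ℕ → ℕ such that ord(u/v − x) ≤ γ(ord(v)) for all u, v ∈ O with v ≠ 0 and u/v ≠ x. (Existence of a diophantine-approximation bound, not necessarily affine.) -/
namespace DioApprox

open MvPowerSeries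

variable {k : Type*} [Field k] {N : ℕ}

/-- total degree of an exponent -/
def mdeg (e : Fin N →₀ ℕ) : ℕ := ∑ i, e i

lemma mdeg_add (a b : Fin N →₀ ℕ) : mdeg (a + b) = mdeg a + mdeg b := by
  simp [mdeg, Finsupp.add_apply, Finset.sum_add_distrib]

lemma le_mdeg (e : Fin N →₀ ℕ) (i : Fin N) : e i ≤ mdeg e :=
  Finset.single_le_sum (fun j _ => Nat.zero_le _) (Finset.mem_univ i)

lemma one_le_mdeg {e : Fin N →₀ ℕ} (he : e ≠ 0) : 1 ≤ mdeg e := by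
  obtain ⟨i, hi⟩ := Finsupp.ne_iff.mp he
  have : 1 ≤ e i := by
    have : e i ≠ 0 := by simpa using hi
    omega
  exact le_trans this (le_mdeg e i)

lemma mdeg_single (i : Fin N) : mdeg (Finsupp.single i 1) = 1 := by
  simp [mdeg, Finsupp.single_apply]

/-- The ideal of power series whose coefficients vanish in degrees `< c`. -/
def SP (c : ℕ) : Ideal (MvPowerSeries (Fin N) k) where
  carrier := {f | ∀ e, mdeg e < c → MvPowerSeries.coeff e f = 0}
  add_mem' := by
    intro f g hf hg e he
    simp only [map_add, hf e he, hg e he, add_zero]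
  zero_mem' := by intro e _; simp
  smul_mem' := by
    classical
    intro g f hf e he
    rw [smul_eq_mul, MvPowerSeries.coeff_mul]
    apply Finset.sum_eq_zero
    rintro ⟨p, q⟩ hpq
    rw [Finset.HasAntidiagonal.mem_antidiagonal] at hpq
    have hq : mdeg q < c := by
      have := mdeg_add p q
      rw [hpq] at this
      omega
    rw [hf q hq, mul_zero]

lemma mem_SP {c : ℕ} {f : MvPowerSeries (Fin N) k} :
    f ∈ (SP c : Ideal (MvPowerSeries (Fin N) k)) ↔
      ∀ e, mdeg e < c → MvPowerSeries.coeff e f = 0 := Iff.rfl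

lemma mem_max_iff (f : MvPowerSeries (Fin N) k) :
    f ∈ IsLocalRing.maximalIdeal (MvPowerSeries (Fin N) k) ↔
      MvPowerSeries.constantCoeff f = 0 := by
  rw [IsLocalRing.mem_maximalIdeal, mem_nonunits_iff,
    MvPowerSeries.isUnit_iff_constantCoeff]
  simp [isUnit_iff_ne_zero]

lemma pow_le_SP (c : ℕ) :
    (IsLocalRing.maximalIdeal (MvPowerSeries (Fin N) k)) ^ c ≤ SP c := by
  induction c with
  | zero => intro f _ e he; omega
  | succ c ih =>
    rw [pow_succ]
    refine Ideal.mul_le.mpr ?_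
    classical
    intro r hr s hs e he
    rw [MvPowerSeries.coeff_mul]
    apply Finset.sum_eq_zero
    rintro ⟨p, q⟩ hpq
    rw [Finset.HasAntidiagonal.mem_antidiagonal] at hpq
    by_cases hq : q = 0
    · have : MvPowerSeries.coeff q s = 0 := by
        rw [hq]
        rw [mem_max_iff] at hs
        simpa [MvPowerSeries.coeff_zero_eq_constantCoeff] using hs
      rw [this, mul_zero]
    · have hq1 : 1 ≤ mdeg q := one_le_mdeg hq
      have hp : mdeg p < c := by
        have := mdeg_add p q
        rw [hpq] at this
        omega
      rw [ih hr p hp, zero_mul]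

lemma SP_le_pow (c : ℕ) :
    (SP c : Ideal (MvPowerSeries (Fin N) k)) ≤
      (IsLocalRing.maximalIdeal (MvPowerSeries (Fin N) k)) ^ c := by
  induction c with
  | zero => simp [Ideal.one_eq_top]
  | succ c ih =>
    intro f hf
    classical
    let g : Fin N → MvPowerSeries (Fin N) k := fun i =>
      (fun e' => if (e' + Finsupp.single i 1).support.min = (i : WithTop (Fin N)) then
        MvPowerSeries.coeff (e' + Finsupp.single i 1) f else 0)
    have hcoeffg : ∀ (i : Fin N) (e' : Fin N →₀ ℕ), MvPowerSeries.coeff e' (g i) =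
        (if (e' + Finsupp.single i 1).support.min = (i : WithTop (Fin N)) then
          MvPowerSeries.coeff (e' + Finsupp.single i 1) f else 0) := fun i e' => rfl
    have hgmem : ∀ i, g i ∈ (SP c : Ideal (MvPowerSeries (Fin N) k)) := by
      intro i e he
      have hme : mdeg (e + Finsupp.single i 1) < c + 1 := by
        rw [mdeg_add, mdeg_single]; omega
      have hcoe : MvPowerSeries.coeff (e + Finsupp.single i 1) f = 0 := hf _ hme
      rw [hcoeffg, hcoe]; simp
    have hdecomp : f = ∑ i : Fin N, MvPowerSeries.X i * g i := by
      apply MvPowerSeries.ext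
      intro e
      rw [map_sum]
      have hterm : ∀ i : Fin N, MvPowerSeries.coeff e (MvPowerSeries.X i * g i) =
          if Finsupp.single i 1 ≤ e then
            (if e.support.min = (i : WithTop (Fin N)) then MvPowerSeries.coeff e f else 0)
          else 0 := by
        intro i
        rw [MvPowerSeries.X_def, MvPowerSeries.coeff_monomial_mul]
        by_cases hle : Finsupp.single i 1 ≤ e
        · rw [if_pos hle, if_pos hle, one_mul]
          have hsub : e - Finsupp.single i 1 + Finsupp.single i 1 = e :=
            tsub_add_cancel_of_le hle
          rw [hcoeffg, hsub]
        · rw [if_neg hle, if_neg hle]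
      by_cases he : e = 0
      · subst he
        have h0 : MvPowerSeries.coeff (0 : Fin N →₀ ℕ) f = 0 := by
          apply hf; simp [mdeg]
        rw [h0]
        apply (Finset.sum_eq_zero ?_).symm
        intro i _
        rw [hterm i, if_neg]
        intro hle
        have := Finsupp.single_le_iff.mp hle
        simp at this
      · have hne : e.support.Nonempty := Finsupp.support_nonempty_iff.mpr he
        set i₀ := e.support.min' hne with hi₀
        have hmin : e.support.min = (i₀ : WithTop (Fin N)) := (Finset.coe_min' hne).symm
        have hi₀mem : i₀ ∈ e.support := Finset.min'_mem _ _
        have hi₀pos : 1 ≤ e i₀ := by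
          have := Finsupp.mem_support_iff.mp hi₀mem
          omega
        rw [Finset.sum_eq_single i₀]
        · rw [hterm i₀, if_pos (Finsupp.single_le_iff.mpr hi₀pos), if_pos hmin]
        · intro i _ hii
          rw [hterm i]
          by_cases hle : Finsupp.single i 1 ≤ e
          · rw [if_pos hle, if_neg, ]
            rw [hmin]
            intro hcontr
            exact hii (WithTop.coe_injective hcontr).symm
          · rw [if_neg hle]
        · intro h; exact absurd (Finset.mem_univ i₀) h
    rw [hdecomp]
    apply Ideal.sum_mem
    intro i _
    have hX : MvPowerSeries.X i ∈ IsLocalRing.maximalIdeal (MvPowerSeries (Fin N) k) := by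
      rw [mem_max_iff]; simp
    have := Ideal.mul_mem_mul hX (ih (hgmem i))
    rwa [← pow_succ'] at this

lemma pow_eq_SP (c : ℕ) :
    (IsLocalRing.maximalIdeal (MvPowerSeries (Fin N) k)) ^ c = SP c :=
  le_antisymm (pow_le_SP c) (SP_le_pow c)

/-- completeness of `MvPowerSeries` -/
lemma complete (k₀ : ℕ) (a : ℕ → MvPowerSeries (Fin N) k)
    (ha : ∀ j, a (j + 1) - a j ∈ (SP (k₀ + j) : Ideal (MvPowerSeries (Fin N) k))) :
    ∃ b : MvPowerSeries (Fin N) k, ∀ j, b - a j ∈ (SP (k₀ + j) : Ideal (MvPowerSeries (Fin N) k)) := by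
  have key : ∀ (e : Fin N →₀ ℕ) (j j' : ℕ), mdeg e < k₀ + j → j ≤ j' →
      MvPowerSeries.coeff e (a j') = MvPowerSeries.coeff e (a j) := by
    intro e j j' he hjj
    induction j', hjj using Nat.le_induction with
    | base => rfl
    | succ j' hj ih =>
      have hstep := ha j' e (by omega)
      rw [map_sub, sub_eq_zero] at hstep
      rw [hstep, ih]
  refine ⟨((fun e => MvPowerSeries.coeff e (a (mdeg e + 1))) : MvPowerSeries (Fin N) k), ?_⟩
  intro j e he
  refine (map_sub (MvPowerSeries.coeff e) _ _).trans ?_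
  have hb : MvPowerSeries.coeff e
      ((fun e => MvPowerSeries.coeff e (a (mdeg e + 1))) : MvPowerSeries (Fin N) k)
      = MvPowerSeries.coeff e (a (mdeg e + 1)) := rfl
  rw [hb]
  rcases le_total j (mdeg e + 1) with h | h
  · rw [key e j (mdeg e + 1) he h, sub_self]
  · rw [key e (mdeg e + 1) j (by omega) h, sub_self]

section Approx

variable {F : Type*} [Field F]

/-- The `k`-submodule of pairs `(u,v)` with `X^c ∣ ι u - x · ι v`. -/
def L (ι : MvPowerSeries (Fin N) k →+* PowerSeries F) (x : PowerSeries F) (c : ℕ) :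
    Submodule k (MvPowerSeries (Fin N) k × MvPowerSeries (Fin N) k) where
  carrier := {p | (PowerSeries.X : PowerSeries F) ^ c ∣ ι p.1 - x * ι p.2}
  add_mem' := by
    intro p q hp hq
    have heq : ι (p + q).1 - x * ι (p + q).2 =
        (ι p.1 - x * ι p.2) + (ι q.1 - x * ι q.2) := by
      simp only [Prod.fst_add, Prod.snd_add, map_add]
      ring
    show (PowerSeries.X : PowerSeries F) ^ c ∣ ι (p + q).1 - x * ι (p + q).2
    rw [heq]
    exact dvd_add hp hq
  zero_mem' := by
    show (PowerSeries.X : PowerSeries F) ^ c ∣ ι (0 : _) - x * ι (0 : _)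
    simp
  smul_mem' := by
    intro a p hp
    show (PowerSeries.X : PowerSeries F) ^ c ∣ ι (a • p).1 - x * ι (a • p).2
    have h1 : (a • p).1 = MvPowerSeries.C a * p.1 := by
      rw [Prod.smul_fst, MvPowerSeries.smul_eq_C_mul]
    have h2 : (a • p).2 = MvPowerSeries.C a * p.2 := by
      rw [Prod.smul_snd, MvPowerSeries.smul_eq_C_mul]
    have heq : ι (a • p).1 - x * ι (a • p).2 =
        ι (MvPowerSeries.C a) * (ι p.1 - x * ι p.2) := by
      rw [h1, h2, map_mul, map_mul]; ring
    rw [heq]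
    exact Dvd.dvd.mul_left hp _

lemma L_antitone (ι : MvPowerSeries (Fin N) k →+* PowerSeries F) (x : PowerSeries F)
    {c c' : ℕ} (h : c ≤ c') : L ι x c' ≤ L ι x c := by
  intro p hp
  exact dvd_trans (pow_dvd_pow _ h) hp

instance finiteEr (r : ℕ) : Finite {e : Fin N →₀ ℕ // mdeg e < r} := by
  apply Finite.of_injective
    (fun e => (fun i => (⟨e.1 i, lt_of_le_of_lt (le_mdeg e.1 i) e.2⟩ : Fin r)) :
      {e : Fin N →₀ ℕ // mdeg e < r} → (Fin N → Fin r))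
  intro e e' h
  apply Subtype.ext
  apply Finsupp.ext
  intro i
  exact congrArg Fin.val (congrFun h i)

/-- truncation below degree `r`, on pairs -/
def tau (r : ℕ) :
    (MvPowerSeries (Fin N) k × MvPowerSeries (Fin N) k) →ₗ[k]
      ({e : Fin N →₀ ℕ // mdeg e < r} → k × k) where
  toFun p := fun e => (MvPowerSeries.coeff e.1 p.1, MvPowerSeries.coeff e.1 p.2)
  map_add' p q := by
    funext e
    simp [Prod.fst_add, Prod.snd_add, Prod.ext_iff]
  map_smul' a p := by
    funext e
    simp [Prod.smul_fst, Prod.smul_snd, Prod.ext_iff, smul_eq_mul]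

lemma tau_eq_coeffs (r : ℕ)
    (p z : MvPowerSeries (Fin N) k × MvPowerSeries (Fin N) k)
    (h : tau r p = tau r z) :
    (p.1 - z.1) ∈ (SP r : Ideal (MvPowerSeries (Fin N) k)) ∧
      (p.2 - z.2) ∈ (SP r : Ideal (MvPowerSeries (Fin N) k)) := by
  constructor
  · intro e he
    have h0 := congrFun h ⟨e, he⟩
    have h1 : MvPowerSeries.coeff e p.1 = MvPowerSeries.coeff e z.1 :=
      congrArg Prod.fst h0
    rw [map_sub, h1, sub_self]
  · intro e he
    have h0 := congrFun h ⟨e, he⟩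
    have h2 : MvPowerSeries.coeff e p.2 = MvPowerSeries.coeff e z.2 :=
      congrArg Prod.snd h0
    rw [map_sub, h2, sub_self]

lemma stab (ι : MvPowerSeries (Fin N) k →+* PowerSeries F) (x : PowerSeries F) (r : ℕ) :
    ∃ s : ℕ, ∀ c : ℕ,
      Submodule.map (tau (k := k) (N := N) r) (L ι x s) ≤ Submodule.map (tau r) (L ι x c) := by
  haveI : IsArtinian k ({e : Fin N →₀ ℕ // mdeg e < r} → k × k) := inferInstance
  have hmono : Monotone (fun c : ℕ =>
      (OrderDual.toDual (Submodule.map (tau (k := k) (N := N) r) (L ι x c)))) := by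
    intro c c' hcc
    exact Submodule.map_mono (L_antitone ι x hcc)
  obtain ⟨n, hn⟩ := IsArtinian.monotone_stabilizes
    (⟨_, hmono⟩ : ℕ →o (Submodule k ({e : Fin N →₀ ℕ // mdeg e < r} → k × k))ᵒᵈ)
  refine ⟨n, fun c => ?_⟩
  rcases le_total c n with h | h
  · exact Submodule.map_mono (L_antitone ι x h)
  · exact le_of_eq (congrArg OrderDual.ofDual (hn c h))


lemma main_aux (ι : MvPowerSeries (Fin N) k →+* PowerSeries F)
    (hι : ∀ (f : MvPowerSeries (Fin N) k) (n : ℕ),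
      f ∈ (IsLocalRing.maximalIdeal (MvPowerSeries (Fin N) k)) ^ n ↔
        (PowerSeries.X : PowerSeries F) ^ n ∣ ι f)
    (x : PowerSeries F) (k₀ : ℕ)
    (hfail : ∀ c : ℕ, ∃ p : MvPowerSeries (Fin N) k × MvPowerSeries (Fin N) k,
      p ∈ L ι x c ∧ p.2 ∉ (SP k₀ : Ideal (MvPowerSeries (Fin N) k))) :
    ∃ a b : MvPowerSeries (Fin N) k, b ≠ 0 ∧ ι a = x * ι b := by
  classical
  -- translation between SP and divisibility
  have hSP : ∀ (f : MvPowerSeries (Fin N) k) (n : ℕ),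
      f ∈ (SP n : Ideal (MvPowerSeries (Fin N) k)) →
        (PowerSeries.X : PowerSeries F) ^ n ∣ ι f := by
    intro f n hf
    rw [← hι]
    rw [pow_eq_SP]
    exact hf
  choose s hs using stab ι x
  -- the invariant
  set Inv : ℕ → (MvPowerSeries (Fin N) k × MvPowerSeries (Fin N) k) → Prop :=
    fun r z => ∀ c, tau r z ∈ Submodule.map (tau (k := k) (N := N) r) (L ι x c) with hInv
  -- initial point
  obtain ⟨p₀, hp₀L, hp₀⟩ := hfail (s k₀)
  have hz0 : Inv k₀ p₀ := fun c => hs k₀ c ⟨p₀, hp₀L, rfl⟩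
  -- the step
  have step : ∀ (j : ℕ) (z : MvPowerSeries (Fin N) k × MvPowerSeries (Fin N) k),
      Inv (k₀ + j) z → ∃ z', Inv (k₀ + (j + 1)) z' ∧
        (z'.1 - z.1) ∈ (SP (k₀ + j) : Ideal (MvPowerSeries (Fin N) k)) ∧
        (z'.2 - z.2) ∈ (SP (k₀ + j) : Ideal (MvPowerSeries (Fin N) k)) := by
    intro j z hz
    obtain ⟨p, hpL, hpeq⟩ := hz (s (k₀ + (j + 1)))
    refine ⟨p, fun c => hs _ c ⟨p, hpL, rfl⟩, ?_⟩
    exact tau_eq_coeffs _ p z hpeq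
  -- the sequence
  let T : ℕ → Type _ := fun j => {z : MvPowerSeries (Fin N) k × MvPowerSeries (Fin N) k //
    Inv (k₀ + j) z}
  let next : ∀ (j : ℕ) (z : T j),
      {z' : T (j + 1) //
        (z'.val.1 - z.val.1) ∈ (SP (k₀ + j) : Ideal (MvPowerSeries (Fin N) k)) ∧
        (z'.val.2 - z.val.2) ∈ (SP (k₀ + j) : Ideal (MvPowerSeries (Fin N) k))} :=
    fun j z =>
      ⟨⟨(step j z.val z.property).choose, ((step j z.val z.property).choose_spec).1⟩,
        ((step j z.val z.property).choose_spec).2.1,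
        ((step j z.val z.property).choose_spec).2.2⟩
  let Z : ∀ j, T j := fun j => Nat.rec (⟨p₀, hz0⟩ : T 0) (fun j z => (next j z).val) j
  have hinc1 : ∀ j, ((Z (j+1)).val.1 - (Z j).val.1) ∈
      (SP (k₀ + j) : Ideal (MvPowerSeries (Fin N) k)) := fun j => ((next j (Z j)).property).1
  have hinc2 : ∀ j, ((Z (j+1)).val.2 - (Z j).val.2) ∈
      (SP (k₀ + j) : Ideal (MvPowerSeries (Fin N) k)) := fun j => ((next j (Z j)).property).2
  -- limits
  obtain ⟨uu, hu⟩ := complete k₀ (fun j => (Z j).val.1) hinc1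
  obtain ⟨vv, hv⟩ := complete k₀ (fun j => (Z j).val.2) hinc2
  -- vv is nonzero
  have hvne : vv ≠ 0 := by
    intro h0
    apply hp₀
    have h1 : vv - (Z 0).val.2 ∈ (SP (k₀ + 0) : Ideal (MvPowerSeries (Fin N) k)) := hv 0
    have h2 : (Z 0).val.2 = p₀.2 := rfl
    rw [h2, h0, zero_sub, add_zero] at h1
    have h3 := neg_mem h1
    rw [neg_neg] at h3
    exact h3
  -- the limit is an exact solution
  have hdvd : ∀ c : ℕ, (PowerSeries.X : PowerSeries F) ^ c ∣ (ι uu - x * ι vv) := by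
    intro c
    obtain ⟨p, hpL, hpeq⟩ := (Z c).property c
    obtain ⟨hq1, hq2⟩ := tau_eq_coeffs _ p (Z c).val hpeq
    have heq : ι uu - x * ι vv =
        (ι p.1 - x * ι p.2)
        + ((ι ((Z c).val.1 - p.1)) - x * (ι ((Z c).val.2 - p.2)))
        + ((ι (uu - (Z c).val.1)) - x * (ι (vv - (Z c).val.2))) := by
      simp only [map_sub]
      ring
    have hd1 : (PowerSeries.X : PowerSeries F) ^ c ∣ (ι p.1 - x * ι p.2) := hpL
    have hle : c ≤ k₀ + c := by omega
    have hd2 : (PowerSeries.X : PowerSeries F) ^ c ∣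
        ((ι ((Z c).val.1 - p.1)) - x * (ι ((Z c).val.2 - p.2))) := by
      have hq1' := neg_mem hq1
      have hq2' := neg_mem hq2
      rw [neg_sub] at hq1' hq2'
      have d1 := hSP _ _ hq1'
      have d2 := hSP _ _ hq2'
      exact dvd_sub (dvd_trans (pow_dvd_pow _ hle) d1)
        (Dvd.dvd.mul_left (dvd_trans (pow_dvd_pow _ hle) d2) x)
    have hd3 : (PowerSeries.X : PowerSeries F) ^ c ∣
        ((ι (uu - (Z c).val.1)) - x * (ι (vv - (Z c).val.2))) := by
      have d1 := hSP _ _ (hu c)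
      have d2 := hSP _ _ (hv c)
      exact dvd_sub (dvd_trans (pow_dvd_pow _ hle) d1)
        (Dvd.dvd.mul_left (dvd_trans (pow_dvd_pow _ hle) d2) x)
    rw [heq]
    exact dvd_add (dvd_add hd1 hd2) hd3
  have hzero : ι uu - x * ι vv = 0 := by
    apply PowerSeries.ext
    intro n
    have := (PowerSeries.X_pow_dvd_iff.mp (hdvd (n + 1))) n (by omega)
    simpa using this
  exact ⟨uu, vv, hvne, sub_eq_zero.mp hzero⟩

end Approx

end DioApprox

/-- Diophantine approximation bound: if `x ∈ V̂` (the completion `F[[T]]` of the valuation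
ring dominating `O = k[[T₁,…,T_N]]`, embedded via the order-preserving ring map `ι`) is
algebraic over `K = Frac O` but `x ∉ K`, then there is a function `γ : ℕ → ℕ` with
`ord(u/v − x) ≤ γ(ord v)` for all `u, v ∈ O`, `v ≠ 0`, `u/v ≠ x`;
i.e. `ord(ι u − x·ι v) ≤ γ(ord v) + ord v`. -/
theorem diophantine_approximation_exists
    {k F : Type*} [Field k] [Field F] {N : ℕ}
    (ι : MvPowerSeries (Fin N) k →+* PowerSeries F)
    (hι : ∀ (f : MvPowerSeries (Fin N) k) (n : ℕ),
      f ∈ (IsLocalRing.maximalIdeal (MvPowerSeries (Fin N) k)) ^ n ↔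
        (PowerSeries.X : PowerSeries F) ^ n ∣ ι f)
    (x : PowerSeries F)
    (halg : ∃ Q : Polynomial (MvPowerSeries (Fin N) k), Q ≠ 0 ∧ Polynomial.eval₂ ι x Q = 0)
    (hirr : ¬ ∃ a b : MvPowerSeries (Fin N) k, b ≠ 0 ∧ ι a = x * ι b) :
    ∃ γ : ℕ → ℕ, ∀ (u v : MvPowerSeries (Fin N) k) (nv : ℕ), v ≠ 0 →
      PowerSeries.order (ι v) = (nv : ℕ∞) → ι u ≠ x * ι v →
      PowerSeries.order (ι u - x * ι v) ≤ ((γ nv + nv : ℕ) : ℕ∞) := by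
  classical
  have key : ∀ n : ℕ, ∃ B : ℕ, ∀ u v : MvPowerSeries (Fin N) k, v ≠ 0 →
      PowerSeries.order (ι v) = (n : ℕ∞) → ι u ≠ x * ι v →
      PowerSeries.order (ι u - x * ι v) ≤ (B : ℕ∞) := by
    intro n
    by_contra hcon
    push_neg at hcon
    apply hirr
    apply DioApprox.main_aux ι hι x (n + 1)
    intro c
    obtain ⟨u, v, hv, hord, hne, hlt⟩ := hcon c
    refine ⟨(u, v), ?_, ?_⟩
    · show (PowerSeries.X : PowerSeries F) ^ c ∣ ι u - x * ι v
      rw [PowerSeries.X_pow_dvd_iff]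
      intro m hm
      apply PowerSeries.coeff_of_lt_order
      exact lt_trans (by exact_mod_cast hm) hlt
    · intro hvSP
      have hdvd : (PowerSeries.X : PowerSeries F) ^ (n + 1) ∣ ι v := by
        rw [← hι, DioApprox.pow_eq_SP]
        exact hvSP
      have hcoeff := PowerSeries.order_eq_nat.mp hord
      exact hcoeff.1 (PowerSeries.X_pow_dvd_iff.mp hdvd n (by omega))
  choose γ hγ using key
  refine ⟨γ, fun u v nv hv hord hne => ?_⟩
  refine le_trans (hγ nv u v hv hord hne) ?_
  exact_mod_cast Nat.le_add_right (γ nv) nv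
end
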